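/- arXiv:1003.1218 — 5 statements merged into one kernel-verified Lean document; each statement's English description precedes it below -/
import Mathlib

section
/- Let u be a nontrivial solution of τ_φ u = z u on I with z ∈ ℝ (so u is nowhere zero), fix x₀ ∈ I, and let φ̂(x) = φ(x) − (tr φ(x)/2)·𝟙 denote the trace-free part of φ(x). Define v(x) = (2 ∫_{x₀}^x ⟨u(r), φ̂(r) u(r)⟩ / |u(r)|⁴ dr)·u(x) + J·u(x)/|u(x)|². Then v is a solution of τ_φ v = z v on I and W_x(u, v) = 1 for every x ∈ I. -/
open MeasureTheory Real Set

/-- The real matrix representing `(1/i)·σ₂`. -/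
noncomputable def Jmat : Matrix (Fin 2) (Fin 2) ℝ := !![0, -1; 1, 0]

/-- The Wronskian `W_x(u,v) = u₁(x) v₂(x) − u₂(x) v₁(x)`. -/
noncomputable def Wr (u v : ℝ → Fin 2 → ℝ) (x : ℝ) : ℝ :=
  u x 0 * v x 1 - u x 1 * v x 0

/-- The Euclidean inner product on `ℝ²`. -/
noncomputable def ip (a b : Fin 2 → ℝ) : ℝ := a 0 * b 0 + a 1 * b 1

/-- `u` is locally absolutely continuous on `I` with a.e. derivative `u'`. -/
def IsACDeriv (I : Set ℝ) (u u' : ℝ → Fin 2 → ℝ) : Prop :=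
  ContinuousOn u I ∧
  ∀ c ∈ I, ∀ x ∈ I, ∀ i : Fin 2,
    IntervalIntegrable (fun t => u' t i) volume c x ∧
    u x i = u c i + ∫ t in c..x, u' t i

/-- `u` is a solution of the Dirac equation `τ_φ u = λ u` on `I`. -/
def IsDiracSolution (I : Set ℝ) (φ : ℝ → Matrix (Fin 2) (Fin 2) ℝ) (lam : ℝ)
    (u : ℝ → Fin 2 → ℝ) : Prop :=
  ∃ u' : ℝ → Fin 2 → ℝ, IsACDeriv I u u' ∧
    ∀ᵐ x ∂volume, x ∈ I → Jmat.mulVec (u' x) + (φ x).mulVec (u x) = lam • u x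

/-- The trace-free part `φ̂(x) = φ(x) − (tr φ(x)/2)·𝟙` of the potential. -/
noncomputable def traceFree (φ : ℝ → Matrix (Fin 2) (Fin 2) ℝ) (x : ℝ) :
    Matrix (Fin 2) (Fin 2) ℝ :=
  φ x - (Matrix.trace (φ x) / 2) • (1 : Matrix (Fin 2) (Fin 2) ℝ)

section Infra
open intervalIntegral

lemma swap_core {c x : ℝ} {F G : ℝ → ℝ}
    (hF : IntegrableOn F (Ioc c x)) (hG : IntegrableOn G (Ioc c x)) :
    ∫ t in Ioc c x, F t * ∫ s in Ioc c t, G s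
      = ∫ s in Ioc c x, G s * ∫ t in Ioc s x, F t := by
  have hmeas : MeasurableSet {p : ℝ × ℝ | p.2 ≤ p.1} :=
    measurableSet_le measurable_snd measurable_fst
  have hμ : True := trivial
  have hprod : Integrable (fun p : ℝ × ℝ => F p.1 * G p.2) ((volume.restrict (Ioc c x)).prod (volume.restrict (Ioc c x))) := hF.mul_prod hG
  have hind : Integrable
      (fun p : ℝ × ℝ => ({p : ℝ × ℝ | p.2 ≤ p.1}).indicator (fun p => F p.1 * G p.2) p)
      ((volume.restrict (Ioc c x)).prod (volume.restrict (Ioc c x))) := hprod.indicator hmeas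
  have swap := MeasureTheory.integral_integral_swap (f := fun t s =>
      ({p : ℝ × ℝ | p.2 ≤ p.1}).indicator (fun p => F p.1 * G p.2) (t, s)) hind
  have hL : (∫ t, ∫ s, ({p : ℝ × ℝ | p.2 ≤ p.1}).indicator
      (fun p => F p.1 * G p.2) (t, s) ∂(volume.restrict (Ioc c x)) ∂(volume.restrict (Ioc c x))) = ∫ t in Ioc c x, F t * ∫ s in Ioc c t, G s := by
    apply MeasureTheory.integral_congr_ae
    filter_upwards [ae_restrict_mem measurableSet_Ioc] with t ht
    have : ∀ s, ({p : ℝ × ℝ | p.2 ≤ p.1}).indicator (fun p => F p.1 * G p.2) (t, s)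
        = (Iic t).indicator (fun s => F t * G s) s := by
      intro s
      by_cases h : s ≤ t <;> simp [Set.indicator, h]
    simp_rw [this]
    rw [MeasureTheory.setIntegral_indicator (measurableSet_Iic (a := t)), MeasureTheory.integral_const_mul]
    congr 1
    rw [show Ioc c x ∩ Iic t = Ioc c t by
      ext s; simp only [mem_inter_iff, mem_Ioc, mem_Iic]
      constructor
      · rintro ⟨⟨h1, _⟩, h3⟩; exact ⟨h1, h3⟩
      · rintro ⟨h1, h2⟩; exact ⟨⟨h1, h2.trans ht.2⟩, h2⟩]
  have hR : (∫ s, ∫ t, ({p : ℝ × ℝ | p.2 ≤ p.1}).indicator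
      (fun p => F p.1 * G p.2) (t, s) ∂(volume.restrict (Ioc c x)) ∂(volume.restrict (Ioc c x))) = ∫ s in Ioc c x, G s * ∫ t in Ioc s x, F t := by
    apply MeasureTheory.integral_congr_ae
    filter_upwards [ae_restrict_mem measurableSet_Ioc] with s hs
    have : ∀ t, ({p : ℝ × ℝ | p.2 ≤ p.1}).indicator (fun p => F p.1 * G p.2) (t, s)
        = (Ici s).indicator (fun t => G s * F t) t := by
      intro t
      by_cases h : s ≤ t <;> simp [Set.indicator, h, mul_comm]
    simp_rw [this]
    rw [MeasureTheory.setIntegral_indicator (measurableSet_Ici (a := s)), MeasureTheory.integral_const_mul]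
    congr 1
    rw [show Ioc c x ∩ Ici s = Icc s x by
      ext t; simp only [mem_inter_iff, mem_Ioc, mem_Ici, mem_Icc]
      constructor
      · rintro ⟨⟨_, h2⟩, h3⟩; exact ⟨h3, h2⟩
      · rintro ⟨h1, h2⟩; exact ⟨⟨lt_of_lt_of_le hs.1 h1, h2⟩, h1⟩]
    exact MeasureTheory.integral_Icc_eq_integral_Ioc
  rw [← hL, ← hR, swap]

/-- `f` is "absolutely continuous" on `I` with derivative `f'` (FTC form). -/
def ACF (I : Set ℝ) (f f' : ℝ → ℝ) : Prop :=
  ContinuousOn f I ∧ ∀ c ∈ I, ∀ x ∈ I,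
    IntervalIntegrable f' volume c x ∧ f x = f c + ∫ t in c..x, f' t

namespace ACF

lemma const (I : Set ℝ) (r : ℝ) : ACF I (fun _ => r) (fun _ => 0) :=
  ⟨continuousOn_const, fun c _ x _ => ⟨intervalIntegrable_const, by simp⟩⟩

lemma add {I : Set ℝ} {f f' g g' : ℝ → ℝ} (hf : ACF I f f') (hg : ACF I g g') :
    ACF I (fun x => f x + g x) (fun x => f' x + g' x) := by
  refine ⟨hf.1.add hg.1, fun c hc x hx => ?_⟩
  obtain ⟨hfi, hfe⟩ := hf.2 c hc x hx
  obtain ⟨hgi, hge⟩ := hg.2 c hc x hx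
  exact ⟨hfi.add hgi, by simp only; rw [integral_add hfi hgi, hfe, hge]; ring⟩

lemma const_mul {I : Set ℝ} {f f' : ℝ → ℝ} (r : ℝ) (hf : ACF I f f') :
    ACF I (fun x => r * f x) (fun x => r * f' x) := by
  refine ⟨hf.1.const_smul r, fun c hc x hx => ?_⟩
  obtain ⟨hfi, hfe⟩ := hf.2 c hc x hx
  exact ⟨hfi.const_mul r, by simp only; rw [intervalIntegral.integral_const_mul, hfe]; ring⟩

lemma neg {I : Set ℝ} {f f' : ℝ → ℝ} (hf : ACF I f f') :
    ACF I (fun x => -f x) (fun x => -f' x) := by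
  have := hf.const_mul (-1); simpa using this

lemma sub {I : Set ℝ} {f f' g g' : ℝ → ℝ} (hf : ACF I f f') (hg : ACF I g g') :
    ACF I (fun x => f x - g x) (fun x => f' x - g' x) := by
  have := hf.add hg.neg; simpa [sub_eq_add_neg] using this

lemma congr_deriv {I : Set ℝ} {f f' g' : ℝ → ℝ} (hIc : I.OrdConnected)
    (hf : ACF I f f') (h : ∀ x ∈ I, f' x = g' x) : ACF I f g' := by
  refine ⟨hf.1, fun c hc x hx => ?_⟩
  obtain ⟨hfi, hfe⟩ := hf.2 c hc x hx
  have heq : EqOn f' g' (uIcc c x) := fun t ht => h t (hIc.uIcc_subset hc hx ht)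
  have hi2 : IntervalIntegrable g' volume c x := by
    refine hfi.congr ?_
    have : ∀ᵐ t ∂volume.restrict (uIoc c x), f' t = g' t := by
      filter_upwards [ae_restrict_mem measurableSet_uIoc] with t ht
      exact heq (uIoc_subset_uIcc ht)
    exact fun t ht => heq (uIoc_subset_uIcc ht)
  exact ⟨hi2, by rw [hfe, integral_congr heq]⟩

lemma primitive {I : Set ℝ} (hIo : IsOpen I) {x₀ : ℝ} (hx₀ : x₀ ∈ I) {h : ℝ → ℝ}
    (hint : ∀ c ∈ I, ∀ x ∈ I, IntervalIntegrable h volume c x) :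
    ACF I (fun x => ∫ t in x₀..x, h t) h := by
  constructor
  · intro x₁ hx₁
    obtain ⟨ε, hε, hball⟩ := Metric.isOpen_iff.1 hIo x₁ hx₁
    have ha : x₁ - ε / 2 ∈ I := hball (by
      simp only [Metric.mem_ball, Real.dist_eq]
      rw [abs_of_nonpos (by linarith)]; linarith)
    have hb : x₁ + ε / 2 ∈ I := hball (by
      simp only [Metric.mem_ball, Real.dist_eq]
      rw [abs_of_nonneg (by linarith)]; linarith)
    have hsub : Icc (x₁ - ε / 2) (x₁ + ε / 2) ⊆ I := by
      intro y hy
      refine hball ?_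
      simp only [Metric.mem_ball, Real.dist_eq]
      rw [abs_lt]; constructor <;> [linarith [hy.1]; linarith [hy.2]]
    have hcont : ContinuousOn (fun y => ∫ t in (x₁ - ε/2)..y, h t) (uIcc (x₁ - ε/2) (x₁ + ε/2)) :=
      continuousOn_primitive_interval' (hint _ ha _ hb) left_mem_uIcc
    have huIcc : uIcc (x₁ - ε/2) (x₁ + ε/2) = Icc (x₁ - ε/2) (x₁ + ε/2) := uIcc_of_le (by linarith)
    rw [huIcc] at hcont
    have heq : EqOn (fun x => ∫ t in x₀..x, h t)
        (fun y => (∫ t in x₀..(x₁ - ε/2), h t) + ∫ t in (x₁ - ε/2)..y, h t)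
        (Icc (x₁ - ε / 2) (x₁ + ε / 2)) := by
      intro y hy
      exact (integral_add_adjacent_intervals (hint _ hx₀ _ ha) (hint _ ha _ (hsub hy))).symm
    have : ContinuousWithinAt (fun x => ∫ t in x₀..x, h t) (Icc (x₁ - ε/2) (x₁ + ε/2)) x₁ := by
      apply (continuousOn_const.add hcont).congr heq |>.continuousWithinAt
      exact ⟨by linarith, by linarith⟩
    have hnhds : Icc (x₁ - ε/2) (x₁ + ε/2) ∈ nhds x₁ := Icc_mem_nhds (by linarith) (by linarith)
    exact (this.continuousAt hnhds).continuousWithinAt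
  · intro c hc x hx
    refine ⟨hint c hc x hx, ?_⟩
    simp only
    rw [← integral_add_adjacent_intervals (hint _ hx₀ _ hc) (hint _ hc _ hx)]

lemma mul {I : Set ℝ} (hIc : I.OrdConnected) {f f' g g' : ℝ → ℝ}
    (hf : ACF I f f') (hg : ACF I g g') :
    ACF I (fun x => f x * g x) (fun x => f' x * g x + f x * g' x) := by
  have hint : ∀ c ∈ I, ∀ x ∈ I,
      IntervalIntegrable (fun t => f' t * g t + f t * g' t) volume c x := by
    intro c hc x hx
    have hsub : uIcc c x ⊆ I := hIc.uIcc_subset hc hx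
    exact ((hf.2 c hc x hx).1.mul_continuousOn (hg.1.mono hsub)).add
      ((hg.2 c hc x hx).1.continuousOn_mul (hf.1.mono hsub))
  have key : ∀ c ∈ I, ∀ x ∈ I, c ≤ x →
      f x * g x = f c * g c + ∫ t in c..x, (f' t * g t + f t * g' t) := by
    intro c hc x hx hcx
    have hIcc : Icc c x ⊆ I := hIc.out hc hx
    have hsub : uIcc c x ⊆ I := hIc.uIcc_subset hc hx
    have intF' := (hf.2 c hc x hx).1
    have intG' := (hg.2 c hc x hx).1
    have intF'G : IntervalIntegrable (fun t => f' t * g t) volume c x :=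
      intF'.mul_continuousOn (hg.1.mono hsub)
    have intFG' : IntervalIntegrable (fun t => f t * g' t) volume c x :=
      intG'.continuousOn_mul (hf.1.mono hsub)
    have hF : IntegrableOn f' (Ioc c x) volume :=
      (intervalIntegrable_iff_integrableOn_Ioc_of_le hcx).1 intF'
    have hG : IntegrableOn g' (Ioc c x) volume :=
      (intervalIntegrable_iff_integrableOn_Ioc_of_le hcx).1 intG'
    -- step A : ∫ f' (g - g c)
    have stepA : ∫ t in Ioc c x, f' t * (g t - g c)
        = ∫ t in Ioc c x, f' t * ∫ s in Ioc c t, g' s := by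
      apply MeasureTheory.integral_congr_ae
      filter_upwards [ae_restrict_mem measurableSet_Ioc] with t ht
      have htI : t ∈ I := hIcc ⟨ht.1.le, ht.2⟩
      have := (hg.2 c hc t htI).2
      rw [this, integral_of_le ht.1.le]
      ring
    have stepB := swap_core hF hG
    have stepC : ∫ s in Ioc c x, g' s * ∫ t in Ioc s x, f' t
        = ∫ s in Ioc c x, g' s * (f x - f s) := by
      apply MeasureTheory.integral_congr_ae
      filter_upwards [ae_restrict_mem measurableSet_Ioc] with s hs
      have hsI : s ∈ I := hIcc ⟨hs.1.le, hs.2⟩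
      have := (hf.2 s hsI x hx).2
      rw [← integral_of_le hs.2, this]
      ring
    -- combine into the interval-integral statement
    have intG'f : IntegrableOn (fun s => g' s * f s) (Ioc c x) volume :=
      (intervalIntegrable_iff_integrableOn_Ioc_of_le hcx).1
        (intG'.mul_continuousOn (hf.1.mono hsub))
    have intG'c : IntegrableOn (fun s => g' s * f x) (Ioc c x) volume := hG.mul_const _
    have stepD : ∫ s in Ioc c x, g' s * (f x - f s)
        = (f x) * (g x - g c) - ∫ s in Ioc c x, f s * g' s := by
      have : ∀ s, g' s * (f x - f s) = g' s * f x - g' s * f s := by intro s; ring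
      simp_rw [this]
      rw [MeasureTheory.integral_sub intG'c intG'f]
      have e1 : ∫ s in Ioc c x, g' s * f x = (g x - g c) * f x := by
        rw [MeasureTheory.integral_mul_const, ← integral_of_le hcx]
        have := (hg.2 c hc x hx).2
        rw [this]; ring
      have e2 : ∫ s in Ioc c x, g' s * f s = ∫ s in Ioc c x, f s * g' s := by
        apply MeasureTheory.integral_congr_ae
        filter_upwards with s using mul_comm _ _
      rw [e1, e2]; ring
    have stepE : ∫ t in Ioc c x, f' t * (g t - g c)
        = (f x) * (g x - g c) - ∫ s in Ioc c x, f s * g' s := by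
      rw [stepA, stepB, stepC, stepD]
    -- now express everything with interval integrals
    have intF'c : IntegrableOn (fun t => f' t * g c) (Ioc c x) volume := hF.mul_const _
    have intF'Gset : IntegrableOn (fun t => f' t * g t) (Ioc c x) volume :=
      (intervalIntegrable_iff_integrableOn_Ioc_of_le hcx).1 intF'G
    have stepF : ∫ t in Ioc c x, f' t * g t
        = (∫ t in Ioc c x, f' t * (g t - g c)) + (f x - f c) * g c := by
      have : ∀ t, f' t * g t = f' t * (g t - g c) + f' t * g c := by intro t; ring
      simp_rw [this]
      have hsubint : IntegrableOn (fun t => f' t * (g t - g c)) (Ioc c x) volume := by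
        apply (intF'Gset.sub intF'c).congr
        filter_upwards with t
        show f' t * g t - f' t * g c = _
        ring
      rw [MeasureTheory.integral_add hsubint intF'c]
      congr 1
      rw [MeasureTheory.integral_mul_const, ← integral_of_le hcx]
      have := (hf.2 c hc x hx).2
      rw [this]; ring
    rw [integral_of_le hcx, MeasureTheory.integral_add intF'Gset
      ((intervalIntegrable_iff_integrableOn_Ioc_of_le hcx).1 intFG'), stepF, stepE]
    ring
  refine ⟨hf.1.mul hg.1, fun c hc x hx => ?_⟩
  refine ⟨hint c hc x hx, ?_⟩
  rcases le_total c x with hcx | hxc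
  · exact key c hc x hx hcx
  · have := key x hx c hc hxc
    rw [integral_symm]
    simp only at this ⊢
    linarith [this]

lemma pow {I : Set ℝ} (hIc : I.OrdConnected) {f f' : ℝ → ℝ} (hf : ACF I f f') (n : ℕ) :
    ACF I (fun x => f x ^ (n + 1)) (fun x => (n + 1 : ℝ) * f x ^ n * f' x) := by
  induction n with
  | zero =>
    have hfe : (fun x => f x ^ (0 + 1)) = f := funext fun x => pow_one _
    rw [hfe]
    exact hf.congr_deriv hIc (fun x _ => by norm_num)
  | succ n ih =>
    have := (ih.mul hIc hf).congr_deriv hIc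
      (g' := fun x => (n + 2 : ℝ) * f x ^ (n + 1) * f' x) (by intro x _; push_cast; ring)
    refine ACF.congr_deriv hIc (f' := fun x => (n + 2 : ℝ) * f x ^ (n + 1) * f' x) ?_ ?_
    · constructor
      · have := this.1
        apply this.congr
        intro x _; simp only; ring
      · intro c hc x hx
        obtain ⟨h1, h2⟩ := this.2 c hc x hx
        refine ⟨h1, ?_⟩
        simp only at h2 ⊢
        rw [show f x ^ (n + 1 + 1) = f x ^ (n+1) * f x by ring,
            show f c ^ (n + 1 + 1) = f c ^ (n+1) * f c by ring, h2]
    · intro x _; push_cast; ring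

lemma gronwall {I : Set ℝ} (hIo : IsOpen I) (hIc : I.OrdConnected)
    {a q : ℝ → ℝ} {c x : ℝ} (hc : c ∈ I) (hx : x ∈ I) (hcx : c ≤ x)
    (ha : ∀ c' ∈ I, ∀ x' ∈ I, IntervalIntegrable a volume c' x')
    (hq : ACF I q (fun t => a t * q t)) (hqc : q c = 0) : q x = 0 := by
  have hIcc : Icc c x ⊆ I := hIc.out hc hx
  have habs : ∀ c' ∈ I, ∀ x' ∈ I, IntervalIntegrable (fun t => |a t|) volume c' x' :=
    fun c' hc' x' hx' => (ha c' hc' x' hx').abs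
  set A : ℝ → ℝ := fun t => ∫ s in c..t, |a s| with hA_def
  have hA : ACF I A (fun t => |a t|) := primitive hIo hc habs
  obtain ⟨M, hM⟩ := (isCompact_Icc (a := c) (b := x)).exists_bound_of_continuousOn
    (hq.1.mono hIcc)
  have hAc : A c = 0 := by simp [hA_def]
  have key : ∀ n : ℕ, ∀ t ∈ Icc c x, |q t| ≤ M * A t ^ n / n.factorial := by
    intro n
    induction n with
    | zero =>
      intro t ht
      simpa using hM t ht
    | succ n ih =>
      intro t ht
      have htI : t ∈ I := hIcc ht
      have hct : c ≤ t := ht.1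
      have hrep : q t = ∫ s in c..t, a s * q s := by
        have := (hq.2 c hc t htI).2
        rw [this, hqc]; ring
      have h1 : |q t| ≤ ∫ s in c..t, |a s * q s| := by
        rw [hrep]
        exact intervalIntegral.abs_integral_le_integral_abs hct
      have hintaq := (hq.2 c hc t htI).1
      have hintA : IntervalIntegrable (fun s => |a s| * (M * A s ^ n / n.factorial))
          volume c t := by
        apply (habs c hc t htI).mul_continuousOn
        apply ContinuousOn.div_const
        exact continuousOn_const.mul ((hA.1.mono (hIc.uIcc_subset hc htI)).pow n)
      have h2 : ∫ s in c..t, |a s * q s| ≤ ∫ s in c..t, |a s| * (M * A s ^ n / n.factorial) := by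
        apply intervalIntegral.integral_mono_on hct hintaq.abs hintA
        intro s hs
        rw [abs_mul]
        apply mul_le_mul_of_nonneg_left _ (abs_nonneg _)
        exact ih s ⟨hs.1, hs.2.trans ht.2⟩
      have h3 : ∫ s in c..t, |a s| * (M * A s ^ n / n.factorial)
          = M * A t ^ (n+1) / (n+1).factorial := by
        have hpow := (hA.pow hIc n).2 c hc t htI
        have e1 : ∫ s in c..t, (n + 1 : ℝ) * A s ^ n * |a s| = A t ^ (n + 1) := by
          have := hpow.2
          simp only at this
          rw [this, hAc]
          norm_num
        have e2 : ∫ s in c..t, |a s| * (M * A s ^ n / n.factorial)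
            = (M / ((n+1) * n.factorial)) * ∫ s in c..t, (n + 1 : ℝ) * A s ^ n * |a s| := by
          rw [← intervalIntegral.integral_const_mul]
          apply intervalIntegral.integral_congr
          intro s _
          have : (n.factorial : ℝ) ≠ 0 := Nat.cast_ne_zero.2 n.factorial_ne_zero
          field_simp
        rw [e2, e1, Nat.factorial_succ]
        push_cast
        ring
      calc |q t| ≤ _ := h1
        _ ≤ _ := h2
        _ = _ := h3
  have hlim : Filter.Tendsto (fun n : ℕ => M * A x ^ n / n.factorial)
      Filter.atTop (nhds 0) := by
    have h0 := (FloorSemiring.tendsto_pow_div_factorial_atTop (A x)).const_mul M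
    rw [mul_zero] at h0
    refine h0.congr fun n => ?_
    rw [mul_div_assoc]
  have hle : |q x| ≤ 0 :=
    ge_of_tendsto' hlim fun n => key n x ⟨hcx, le_rfl⟩
  exact abs_eq_zero.1 (le_antisymm hle (abs_nonneg _))

lemma inv {I : Set ℝ} (hIo : IsOpen I) (hIc : I.OrdConnected) {f f' : ℝ → ℝ}
    (hf : ACF I f f') (hne : ∀ x ∈ I, f x ≠ 0) :
    ACF I (fun x => (f x)⁻¹) (fun x => -(f' x / f x ^ 2)) := by
  have hcont : ContinuousOn (fun x => (f x)⁻¹) I := hf.1.inv₀ hne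
  have hfmla : (fun x => -(f' x / f x ^ 2)) = fun x => f' x * -((f x ^ 2)⁻¹) := by
    funext x; rw [div_eq_mul_inv]; ring
  have hint : ∀ c ∈ I, ∀ x ∈ I,
      IntervalIntegrable (fun t => -(f' t / f t ^ 2)) volume c x := by
    intro c hc x hx
    rw [hfmla]
    apply (hf.2 c hc x hx).1.mul_continuousOn
    have hsub := hIc.uIcc_subset hc hx
    exact (((hf.1.pow 2).inv₀ fun t ht => pow_ne_zero _ (hne t ht)).neg).mono hsub
  have ha : ∀ c ∈ I, ∀ x ∈ I, IntervalIntegrable (fun t => f' t / f t) volume c x := by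
    intro c hc x hx
    have : (fun t => f' t / f t) = fun t => f' t * (f t)⁻¹ := by
      funext t; rw [div_eq_mul_inv]
    rw [this]
    exact (hf.2 c hc x hx).1.mul_continuousOn (hcont.mono (hIc.uIcc_subset hc hx))
  have key : ∀ c ∈ I, ∀ x ∈ I, c ≤ x →
      (f x)⁻¹ = (f c)⁻¹ + ∫ t in c..x, -(f' t / f t ^ 2) := by
    intro c hc x hx hcx
    set w : ℝ → ℝ := fun t => (f c)⁻¹ + ∫ s in c..t, -(f' s / f s ^ 2) with hw_def
    have hw : ACF I w (fun t => -(f' t / f t ^ 2)) := by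
      have := (const I ((f c)⁻¹)).add (primitive hIo hc hint)
      exact this.congr_deriv hIc fun t _ => by simp
    set q : ℝ → ℝ := fun t => f t * w t - 1 with hq_def
    have hq : ACF I q (fun t => (f' t / f t) * q t) := by
      have h1 := (hf.mul hIc hw).sub (const I 1)
      refine h1.congr_deriv hIc fun t ht => ?_
      have hft := hne t ht
      simp only [hq_def]
      field_simp
      ring
    have hqc : q c = 0 := by
      simp only [hq_def, hw_def]
      rw [intervalIntegral.integral_same]
      rw [add_zero, mul_inv_cancel₀ (hne c hc), sub_self]
    have hqx : q x = 0 := gronwall hIo hIc hc hx hcx ha hq hqc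
    have : f x * w x = 1 := by
      have := hqx
      simp only [hq_def] at this
      linarith
    have hwx : w x = (f x)⁻¹ := eq_inv_of_mul_eq_one_right this
    rw [← hwx]
  refine ⟨hcont, fun c hc x hx => ⟨hint c hc x hx, ?_⟩⟩
  rcases le_total c x with hcx | hxc
  · exact key c hc x hx hcx
  · have := key x hx c hc hxc
    rw [integral_symm]
    linarith

end ACF
end Infra

lemma Jmat_mulVec0 (w : Fin 2 → ℝ) : Jmat.mulVec w 0 = -(w 1) := by
  simp [Jmat, Matrix.mulVec, dotProduct, Fin.sum_univ_two]

lemma Jmat_mulVec1 (w : Fin 2 → ℝ) : Jmat.mulVec w 1 = w 0 := by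
  simp [Jmat, Matrix.mulVec, dotProduct, Fin.sum_univ_two]

lemma mulVec_e0 (A : Matrix (Fin 2) (Fin 2) ℝ) (w : Fin 2 → ℝ) :
    A.mulVec w 0 = A 0 0 * w 0 + A 0 1 * w 1 := by
  simp [Matrix.mulVec, dotProduct, Fin.sum_univ_two]

lemma mulVec_e1 (A : Matrix (Fin 2) (Fin 2) ℝ) (w : Fin 2 → ℝ) :
    A.mulVec w 1 = A 1 0 * w 0 + A 1 1 * w 1 := by
  simp [Matrix.mulVec, dotProduct, Fin.sum_univ_two]

set_option maxHeartbeats 2000000 in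
theorem second_solution
    (I : Set ℝ) (hIo : IsOpen I) (hIc : I.OrdConnected)
    (φ : ℝ → Matrix (Fin 2) (Fin 2) ℝ)
    (hs : ∀ x ∈ I, (φ x).IsSymm)
    (hi : ∀ i j : Fin 2, LocallyIntegrableOn (fun x => φ x i j) I volume)
    (z : ℝ) (u : ℝ → Fin 2 → ℝ)
    (hu : IsDiracSolution I φ z u) (hunt : ∀ x ∈ I, u x ≠ 0)
    (x₀ : ℝ) (hx₀ : x₀ ∈ I)
    (v : ℝ → Fin 2 → ℝ)
    (hv : ∀ x ∈ I, v x =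
      (2 * ∫ r in x₀..x, ip (u r) ((traceFree φ r).mulVec (u r)) / (ip (u r) (u r)) ^ 2) • u x
      + (ip (u x) (u x))⁻¹ • Jmat.mulVec (u x)) :
    IsDiracSolution I φ z v ∧ ∀ x ∈ I, Wr u v x = 1 := by
  obtain ⟨u', ⟨hucont, huftc⟩, huode⟩ := hu
  have hu0 : ACF I (fun x => u x 0) (fun x => u' x 0) :=
    ⟨(continuous_apply (0 : Fin 2)).comp_continuousOn hucont,
     fun c hc x hx => huftc c hc x hx 0⟩
  have hu1 : ACF I (fun x => u x 1) (fun x => u' x 1) :=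
    ⟨(continuous_apply (1 : Fin 2)).comp_continuousOn hucont,
     fun c hc x hx => huftc c hc x hx 1⟩
  have hρ : ACF I (fun x => u x 0 * u x 0 + u x 1 * u x 1)
      (fun x => u' x 0 * u x 0 + u x 0 * u' x 0 + (u' x 1 * u x 1 + u x 1 * u' x 1)) :=
    (hu0.mul hIc hu0).add (hu1.mul hIc hu1)
  have hρne : ∀ x ∈ I, u x 0 * u x 0 + u x 1 * u x 1 ≠ 0 := by
    intro x hx
    rcases Function.ne_iff.1 (hunt x hx) with ⟨i, hi⟩
    have h0 : (0:ℝ) ≤ u x 0 * u x 0 := mul_self_nonneg _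
    have h1 : (0:ℝ) ≤ u x 1 * u x 1 := mul_self_nonneg _
    fin_cases i
    · have := mul_self_pos.2 (show u x 0 ≠ 0 by simpa using hi)
      exact ne_of_gt (by linarith)
    · have := mul_self_pos.2 (show u x 1 ≠ 0 by simpa using hi)
      exact ne_of_gt (by linarith)
  have hρinv : ACF I (fun x => (u x 0 * u x 0 + u x 1 * u x 1)⁻¹)
      (fun x => -((u' x 0 * u x 0 + u x 0 * u' x 0 + (u' x 1 * u x 1 + u x 1 * u' x 1))
        / (u x 0 * u x 0 + u x 1 * u x 1) ^ 2)) :=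
    hρ.inv hIo hIc hρne
  have hφint : ∀ i j : Fin 2, ∀ c ∈ I, ∀ x ∈ I,
      IntervalIntegrable (fun r => φ r i j) volume c x := fun i j c hc x hx =>
    ((hi i j).integrableOn_compact_subset (hIc.uIcc_subset hc hx)
      isCompact_uIcc).intervalIntegrable
  set g : ℝ → ℝ :=
      fun r => ip (u r) ((traceFree φ r).mulVec (u r)) / ip (u r) (u r) ^ 2 with hg_def
  have hg_eq : ∀ r, g r =
      φ r 0 0 * ((u r 0 * u r 0 - (u r 0 * u r 0 + u r 1 * u r 1) / 2)
        / (u r 0 * u r 0 + u r 1 * u r 1) ^ 2)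
    + φ r 0 1 * ((u r 0 * u r 1) / (u r 0 * u r 0 + u r 1 * u r 1) ^ 2)
    + φ r 1 0 * ((u r 1 * u r 0) / (u r 0 * u r 0 + u r 1 * u r 1) ^ 2)
    + φ r 1 1 * ((u r 1 * u r 1 - (u r 0 * u r 0 + u r 1 * u r 1) / 2)
        / (u r 0 * u r 0 + u r 1 * u r 1) ^ 2) := by
    intro r
    simp only [hg_def, ip, traceFree, Matrix.mulVec, dotProduct, Fin.sum_univ_two,
      Matrix.trace, Matrix.diag, Matrix.sub_apply, Matrix.smul_apply, Matrix.one_apply,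
      smul_eq_mul]
    norm_num
    ring
  have hρcont : ContinuousOn (fun r => u r 0 * u r 0 + u r 1 * u r 1) I := hρ.1
  have hgint : ∀ c ∈ I, ∀ x ∈ I, IntervalIntegrable g volume c x := by
    intro c hc x hx
    have hsub := hIc.uIcc_subset hc hx
    have hpne : ∀ r ∈ I, (u r 0 * u r 0 + u r 1 * u r 1) ^ 2 ≠ 0 :=
      fun r hr => pow_ne_zero _ (hρne r hr)
    have hC1 : ContinuousOn (fun r => (u r 0 * u r 0 - (u r 0 * u r 0 + u r 1 * u r 1) / 2)
        / (u r 0 * u r 0 + u r 1 * u r 1) ^ 2) I :=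
      ((hu0.1.mul hu0.1).sub (hρcont.div_const 2)).div (hρcont.pow 2) hpne
    have hC2 : ContinuousOn (fun r => (u r 0 * u r 1)
        / (u r 0 * u r 0 + u r 1 * u r 1) ^ 2) I :=
      (hu0.1.mul hu1.1).div (hρcont.pow 2) hpne
    have hC3 : ContinuousOn (fun r => (u r 1 * u r 0)
        / (u r 0 * u r 0 + u r 1 * u r 1) ^ 2) I :=
      (hu1.1.mul hu0.1).div (hρcont.pow 2) hpne
    have hC4 : ContinuousOn (fun r => (u r 1 * u r 1 - (u r 0 * u r 0 + u r 1 * u r 1) / 2)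
        / (u r 0 * u r 0 + u r 1 * u r 1) ^ 2) I :=
      ((hu1.1.mul hu1.1).sub (hρcont.div_const 2)).div (hρcont.pow 2) hpne
    have hint : IntervalIntegrable (fun r =>
        φ r 0 0 * ((u r 0 * u r 0 - (u r 0 * u r 0 + u r 1 * u r 1) / 2)
          / (u r 0 * u r 0 + u r 1 * u r 1) ^ 2)
      + φ r 0 1 * ((u r 0 * u r 1) / (u r 0 * u r 0 + u r 1 * u r 1) ^ 2)
      + φ r 1 0 * ((u r 1 * u r 0) / (u r 0 * u r 0 + u r 1 * u r 1) ^ 2)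
      + φ r 1 1 * ((u r 1 * u r 1 - (u r 0 * u r 0 + u r 1 * u r 1) / 2)
          / (u r 0 * u r 0 + u r 1 * u r 1) ^ 2)) volume c x :=
      ((((hφint 0 0 c hc x hx).mul_continuousOn (hC1.mono hsub)).add
        ((hφint 0 1 c hc x hx).mul_continuousOn (hC2.mono hsub))).add
        ((hφint 1 0 c hc x hx).mul_continuousOn (hC3.mono hsub))).add
        ((hφint 1 1 c hc x hx).mul_continuousOn (hC4.mono hsub))
    exact hint.congr (fun r _ => (hg_eq r).symm)
  have hF : ACF I (fun x => 2 * ∫ r in x₀..x, g r) (fun x => 2 * g x) :=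
    (ACF.primitive hIo hx₀ hgint).const_mul 2
  -- the component formulas for v
  have hv0 : ∀ x ∈ I, v x 0 = (2 * ∫ r in x₀..x, g r) * u x 0
      + (u x 0 * u x 0 + u x 1 * u x 1)⁻¹ * (-(u x 1)) := by
    intro x hx
    rw [hv x hx, Pi.add_apply, Pi.smul_apply, Pi.smul_apply, Jmat_mulVec0]
    simp only [ip, smul_eq_mul]
  have hv1 : ∀ x ∈ I, v x 1 = (2 * ∫ r in x₀..x, g r) * u x 1
      + (u x 0 * u x 0 + u x 1 * u x 1)⁻¹ * u x 0 := by
    intro x hx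
    rw [hv x hx, Pi.add_apply, Pi.smul_apply, Pi.smul_apply, Jmat_mulVec1]
    simp only [ip, smul_eq_mul]
  -- ACF structures for the two components
  have hw0 : ACF I (fun x => (2 * ∫ r in x₀..x, g r) * u x 0
      + (u x 0 * u x 0 + u x 1 * u x 1)⁻¹ * (-(u x 1)))
      (fun x => (2 * g x * u x 0 + (2 * ∫ r in x₀..x, g r) * u' x 0)
        + (-((u' x 0 * u x 0 + u x 0 * u' x 0 + (u' x 1 * u x 1 + u x 1 * u' x 1))
            / (u x 0 * u x 0 + u x 1 * u x 1) ^ 2) * (-(u x 1))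
          + (u x 0 * u x 0 + u x 1 * u x 1)⁻¹ * (-(u' x 1)))) :=
    (hF.mul hIc hu0).add (hρinv.mul hIc hu1.neg)
  have hw1 : ACF I (fun x => (2 * ∫ r in x₀..x, g r) * u x 1
      + (u x 0 * u x 0 + u x 1 * u x 1)⁻¹ * u x 0)
      (fun x => (2 * g x * u x 1 + (2 * ∫ r in x₀..x, g r) * u' x 1)
        + (-((u' x 0 * u x 0 + u x 0 * u' x 0 + (u' x 1 * u x 1 + u x 1 * u' x 1))
            / (u x 0 * u x 0 + u x 1 * u x 1) ^ 2) * u x 0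
          + (u x 0 * u x 0 + u x 1 * u x 1)⁻¹ * u' x 0)) :=
    (hF.mul hIc hu1).add (hρinv.mul hIc hu0)
  constructor
  · -- IsDiracSolution
    refine ⟨fun x => ![(2 * g x * u x 0 + (2 * ∫ r in x₀..x, g r) * u' x 0)
        + (-((u' x 0 * u x 0 + u x 0 * u' x 0 + (u' x 1 * u x 1 + u x 1 * u' x 1))
            / (u x 0 * u x 0 + u x 1 * u x 1) ^ 2) * (-(u x 1))
          + (u x 0 * u x 0 + u x 1 * u x 1)⁻¹ * (-(u' x 1))),
        (2 * g x * u x 1 + (2 * ∫ r in x₀..x, g r) * u' x 1)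
        + (-((u' x 0 * u x 0 + u x 0 * u' x 0 + (u' x 1 * u x 1 + u x 1 * u' x 1))
            / (u x 0 * u x 0 + u x 1 * u x 1) ^ 2) * u x 0
          + (u x 0 * u x 0 + u x 1 * u x 1)⁻¹ * u' x 0)], ⟨?_, ?_⟩, ?_⟩
    · -- continuity of v on I
      rw [continuousOn_pi]
      intro i
      fin_cases i
      · exact hw0.1.congr fun x hx => hv0 x hx
      · exact hw1.1.congr fun x hx => hv1 x hx
    · -- FTC property
      intro c hc x hx i
      have key0 : IntervalIntegrable (fun t => (2 * g t * u t 0 + (2 * ∫ r in x₀..t, g r) * u' t 0)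
          + (-((u' t 0 * u t 0 + u t 0 * u' t 0 + (u' t 1 * u t 1 + u t 1 * u' t 1))
              / (u t 0 * u t 0 + u t 1 * u t 1) ^ 2) * (-(u t 1))
            + (u t 0 * u t 0 + u t 1 * u t 1)⁻¹ * (-(u' t 1)))) volume c x ∧
          v x 0 = v c 0 + ∫ t in c..x, ((2 * g t * u t 0 + (2 * ∫ r in x₀..t, g r) * u' t 0)
          + (-((u' t 0 * u t 0 + u t 0 * u' t 0 + (u' t 1 * u t 1 + u t 1 * u' t 1))
              / (u t 0 * u t 0 + u t 1 * u t 1) ^ 2) * (-(u t 1))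
            + (u t 0 * u t 0 + u t 1 * u t 1)⁻¹ * (-(u' t 1)))) := by
        refine ⟨(hw0.2 c hc x hx).1, ?_⟩
        rw [hv0 x hx, hv0 c hc]
        exact (hw0.2 c hc x hx).2
      have key1 : IntervalIntegrable (fun t => (2 * g t * u t 1 + (2 * ∫ r in x₀..t, g r) * u' t 1)
          + (-((u' t 0 * u t 0 + u t 0 * u' t 0 + (u' t 1 * u t 1 + u t 1 * u' t 1))
              / (u t 0 * u t 0 + u t 1 * u t 1) ^ 2) * u t 0
            + (u t 0 * u t 0 + u t 1 * u t 1)⁻¹ * u' t 0)) volume c x ∧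
          v x 1 = v c 1 + ∫ t in c..x, ((2 * g t * u t 1 + (2 * ∫ r in x₀..t, g r) * u' t 1)
          + (-((u' t 0 * u t 0 + u t 0 * u' t 0 + (u' t 1 * u t 1 + u t 1 * u' t 1))
              / (u t 0 * u t 0 + u t 1 * u t 1) ^ 2) * u t 0
            + (u t 0 * u t 0 + u t 1 * u t 1)⁻¹ * u' t 0)) := by
        refine ⟨(hw1.2 c hc x hx).1, ?_⟩
        rw [hv1 x hx, hv1 c hc]
        exact (hw1.2 c hc x hx).2
      fin_cases i
      · exact key0
      · exact key1
    · -- the ODE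
      filter_upwards [huode] with x hxode hxI
      have hode := hxode hxI
      have h0 := congrFun hode 0
      have h1 := congrFun hode 1
      rw [Pi.add_apply, Jmat_mulVec0, mulVec_e0, Pi.smul_apply, smul_eq_mul] at h0
      rw [Pi.add_apply, Jmat_mulVec1, mulVec_e1, Pi.smul_apply, smul_eq_mul] at h1
      have hsymm : φ x 1 0 = φ x 0 1 := (hs x hxI).apply 0 1
      have hρx := hρne x hxI
      rw [hsymm] at h1
      have e1 : u' x 1 = φ x 0 0 * u x 0 + φ x 0 1 * u x 1 - z * u x 0 := by linarith
      have e0 : u' x 0 = z * u x 1 - φ x 0 1 * u x 0 - φ x 1 1 * u x 1 := by linarith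
      funext i
      fin_cases i
      · simp only [Fin.zero_eta, Fin.isValue]
        rw [Pi.add_apply, Jmat_mulVec0, mulVec_e0, Pi.smul_apply, smul_eq_mul]
        simp only [Matrix.cons_val_zero, Matrix.cons_val_one, Matrix.head_cons]
        rw [hv0 x hxI, hv1 x hxI, hg_eq x, hsymm, e0, e1]
        generalize (∫ (r : ℝ) in x₀..x, g r) = Fx
        have hρx2 : u x 0 ^ 2 + u x 1 ^ 2 ≠ 0 := by rw [sq, sq]; exact hρx
        field_simp [hρx, hρx2]
        ring
      · simp only [Fin.mk_one, Fin.isValue]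
        rw [Pi.add_apply, Jmat_mulVec1, mulVec_e1, Pi.smul_apply, smul_eq_mul]
        simp only [Matrix.cons_val_zero, Matrix.cons_val_one, Matrix.head_cons]
        rw [hv0 x hxI, hv1 x hxI, hg_eq x, hsymm, e0, e1]
        generalize (∫ (r : ℝ) in x₀..x, g r) = Fx
        have hρx2 : u x 0 ^ 2 + u x 1 ^ 2 ≠ 0 := by rw [sq, sq]; exact hρx
        field_simp [hρx, hρx2]
        ring
  · -- Wronskian
    intro x hx
    show u x 0 * v x 1 - u x 1 * v x 0 = 1
    rw [hv0 x hx, hv1 x hx]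
    have hρx := hρne x hx
    generalize (∫ (r : ℝ) in x₀..x, g r) = Fx
    have hρx2 : u x 0 ^ 2 + u x 1 ^ 2 ≠ 0 := by rw [sq, sq]; exact hρx
    field_simp [hρx, hρx2]
    ring
end

section
/- Let u₀, v₀ : I → ℝ² be continuous, nowhere vanishing, with W_x(u₀, v₀) = 1 for all x ∈ I, and let u₁ : I → ℝ² be continuous and nowhere vanishing. Set R(x) = √(W_x(u₀,u₁)² + W_x(v₀,u₁)²) (which is positive), and let ψ : I → ℝ be a continuous function with W_x(u₀, u₁) = −R(x)·sin ψ(x) and W_x(v₀, u₁) = −R(x)·cos ψ(x) for all x ∈ I. Then ψ is a Prüfer angle for the Wronskian W(u₀, u₁): for every c < d in I, ⌈ψ(d)/π⌉ − ⌊ψ(c)/π⌋ − 1 = #_{(c,d)}(u₀, u₁). -/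
open MeasureTheory Real Set

/-- `θ` is a Prüfer angle for the nowhere vanishing continuous function `u` on `I`. -/
def IsPruefer (I : Set ℝ) (u : ℝ → Fin 2 → ℝ) (θ : ℝ → ℝ) : Prop :=
  ContinuousOn θ I ∧
  ∀ x ∈ I, ∃ ρ : ℝ, 0 < ρ ∧ u x 0 = ρ * Real.sin (θ x) ∧ u x 1 = ρ * Real.cos (θ x)

/-- The weighted number of sign flips `#_{(c,d)}(u,v)` computed from Prüfer angles. -/
noncomputable def numFlips (θu θv : ℝ → ℝ) (c d : ℝ) : ℤ :=
  ⌈(θv d - θu d) / Real.pi⌉ - ⌊(θv c - θu c) / Real.pi⌋ - 1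

lemma aux_sin_floor (y : ℝ) (h : Real.sin y ≠ 0) :
    (⌊y / π⌋ : ℝ) * π < y ∧ y < (⌊y / π⌋ + 1) * π ∧
      (0 < Real.sin y ↔ Even ⌊y / π⌋) := by
  have hπ : (0:ℝ) < π := Real.pi_pos
  set m := ⌊y / π⌋ with hm
  have h1 : (m : ℝ) ≤ y / π := Int.floor_le _
  have h2 : y / π < m + 1 := Int.lt_floor_add_one _
  have hle : (m : ℝ) * π ≤ y := by
    calc (m:ℝ) * π ≤ (y/π) * π := by nlinarith
    _ = y := by field_simp
  have hlt : y < ((m : ℝ) + 1) * π := by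
    calc y = (y/π)*π := by field_simp
    _ < ((m:ℝ)+1)*π := by nlinarith
  have hne : (m : ℝ) * π ≠ y := by
    intro he
    exact h (by rw [← he]; exact Real.sin_int_mul_pi m)
  have hlt' : (m : ℝ) * π < y := lt_of_le_of_ne hle hne
  refine ⟨hlt', hlt, ?_⟩
  have hr : Real.sin (y - m * π) > 0 :=
    Real.sin_pos_of_pos_of_lt_pi (by linarith) (by nlinarith)
  have hsy : Real.sin y = (-1) ^ m * Real.sin (y - m * π) := by
    have := Real.sin_add_int_mul_pi (y - m * π) m
    simpa using this
  rcases Int.even_or_odd m with he | ho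
  · have : ((-1 : ℝ)) ^ m = 1 := he.neg_one_zpow
    rw [this, one_mul] at hsy
    simp only [he, iff_true]
    linarith [hr, hsy.ge]
  · have : ((-1 : ℝ)) ^ m = -1 := ho.neg_one_zpow
    rw [this] at hsy
    have : Real.sin y < 0 := by rw [hsy]; nlinarith
    constructor
    · intro hp; linarith
    · intro he; exact absurd he (Int.not_even_iff_odd.2 ho)

lemma aux_ceil (y : ℝ) (h1 : (⌊y / π⌋ : ℝ) * π < y) (h2 : y < (⌊y / π⌋ + 1) * π) :
    ⌈y / π⌉ = ⌊y / π⌋ + 1 := by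
  have hπ : (0:ℝ) < π := Real.pi_pos
  have hl : (⌊y / π⌋ : ℝ) < y / π := by rw [lt_div_iff₀ hπ]; linarith
  have hu : y / π ≤ (⌊y / π⌋ : ℝ) + 1 := by rw [div_le_iff₀ hπ]; nlinarith
  have hc1 : ⌈y / π⌉ ≤ ⌊y / π⌋ + 1 := Int.ceil_le.2 (by push_cast; linarith)
  have hc2 : ⌊y / π⌋ < ⌈y / π⌉ := by
    have := Int.le_ceil (y / π)
    exact_mod_cast lt_of_lt_of_le hl this
  omega

lemma ptwise0 (a b t : ℝ) (ht : 0 < t) (h1 : Real.sin a = t * Real.sin b)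
    (h2 : Real.sin b = 0 → Real.cos a = Real.cos b) (h3 : |a - b| < π) :
    ⌊a / π⌋ = ⌊b / π⌋ ∧ ⌈a / π⌉ = ⌈b / π⌉ := by
  have hπ : (0:ℝ) < π := Real.pi_pos
  obtain ⟨h3l, h3r⟩ := abs_lt.1 h3
  rcases eq_or_ne (Real.sin b) 0 with hb | hb
  · have hsa : Real.sin a = 0 := by rw [h1, hb, mul_zero]
    have hca := h2 hb
    have hcos : Real.cos (a - b) = 1 := by
      rw [Real.cos_sub, hca, hsa, hb]
      nlinarith [Real.sin_sq_add_cos_sq b]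
    have hab : a - b = 0 :=
      (Real.cos_eq_one_iff_of_lt_of_lt (by linarith) (by linarith)).1 hcos
    have : a = b := by linarith
    simp [this]
  · have ha : Real.sin a ≠ 0 := by
      intro h0; rw [h0] at h1
      exact hb (by nlinarith [h1.symm])
    obtain ⟨hb1, hb2, hb3⟩ := aux_sin_floor b hb
    obtain ⟨ha1, ha2, ha3⟩ := aux_sin_floor a ha
    have hsign : 0 < Real.sin a ↔ 0 < Real.sin b := by
      constructor
      · intro hp; nlinarith [lt_or_gt_of_ne hb]
      · intro hp; nlinarith
    have hpar : Even ⌊a / π⌋ ↔ Even ⌊b / π⌋ := by rw [← ha3, ← hb3, hsign]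
    have hm : ⌊a / π⌋ = ⌊b / π⌋ := by
      by_contra hne
      have hpar' : ⌊a / π⌋ % 2 = ⌊b / π⌋ % 2 := by
        rw [Int.even_iff, Int.even_iff] at hpar; omega
      have hcases : ⌊a / π⌋ ≥ ⌊b / π⌋ + 2 ∨ ⌊b / π⌋ ≥ ⌊a / π⌋ + 2 := by omega
      rcases hcases with hc | hc
      · have : ((⌊b / π⌋ : ℝ) + 2) ≤ (⌊a / π⌋ : ℝ) := by exact_mod_cast hc
        nlinarith
      · have : ((⌊a / π⌋ : ℝ) + 2) ≤ (⌊b / π⌋ : ℝ) := by exact_mod_cast hc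
        nlinarith
    refine ⟨hm, ?_⟩
    rw [aux_ceil a ha1 ha2, aux_ceil b hb1 hb2, hm]

lemma ptwiseN (a b t : ℝ) (n : ℤ) (ht : 0 < t) (h1 : Real.sin a = t * Real.sin b)
    (h2 : Real.sin b = 0 → Real.cos a = Real.cos b)
    (h3 : (2 * (n:ℝ) - 1) * π < a - b) (h4 : a - b < (2 * (n:ℝ) + 1) * π) :
    ⌊a / π⌋ = ⌊b / π⌋ + 2 * n ∧ ⌈a / π⌉ = ⌈b / π⌉ + 2 * n := by
  have hπ : (0:ℝ) < π := Real.pi_pos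
  set a' := a - n * (2 * π) with ha'
  have hsa : Real.sin a' = Real.sin a := Real.sin_sub_int_mul_two_pi a n
  have hca : Real.cos a' = Real.cos a := Real.cos_sub_int_mul_two_pi a n
  have habs : |a' - b| < π := by
    rw [abs_lt]; constructor <;> [nlinarith; nlinarith]
  obtain ⟨hf, hc⟩ := ptwise0 a' b t ht (by rw [hsa, h1]) (fun h => by rw [hca]; exact h2 h) habs
  have hdiv : a / π = a' / π + ((2 * n : ℤ) : ℝ) := by
    field_simp [ha']
    push_cast
    ring
  constructor
  · rw [hdiv, Int.floor_add_intCast, hf]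
  · rw [hdiv, Int.ceil_add_intCast, hc]

-- key pointwise lemma
lemma key_pt (W1 Wv R ρ₀ ρ₁ a b δ : ℝ)
    (hρ₀ : 0 < ρ₀) (hρ₁ : 0 < ρ₁) (hR : 0 < R)
    (hWu : W1 = -(ρ₀ * ρ₁) * Real.sin (b - δ))
    (hW1 : W1 = -R * Real.sin a)
    (hWveq : Real.sin (b - δ) = 0 → Wv = -(ρ₁ / ρ₀ * Real.cos (b - δ)))
    (hW2 : Wv = -R * Real.cos a) :
    Real.sin a = (ρ₀ * ρ₁ / R) * Real.sin (b - δ) ∧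
      (Real.sin (b - δ) = 0 → Real.cos a = Real.cos (b - δ)) := by
  have hsin : Real.sin a = (ρ₀ * ρ₁ / R) * Real.sin (b - δ) := by
    have h := hW1.symm.trans hWu
    field_simp
    nlinarith [h]
  refine ⟨hsin, ?_⟩
  intro h0
  have hsa : Real.sin a = 0 := by rw [hsin, h0, mul_zero]
  have hca2 : Real.cos a ^ 2 = 1 := by nlinarith [Real.sin_sq_add_cos_sq a]
  have hcb2 : Real.cos (b - δ) ^ 2 = 1 := by nlinarith [Real.sin_sq_add_cos_sq (b - δ)]
  have hWv := hWveq h0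
  have hc : Real.cos a = ρ₁ / (ρ₀ * R) * Real.cos (b - δ) := by
    rw [hWv] at hW2
    field_simp at hW2 ⊢
    nlinarith [hW2]
  have hs : ρ₁ / (ρ₀ * R) = 1 := by
    have h1 : (ρ₁ / (ρ₀ * R)) ^ 2 = 1 := by
      have := hca2
      rw [hc] at this
      nlinarith [this]
    have h2 : 0 < ρ₁ / (ρ₀ * R) := by positivity
    nlinarith
  rw [hc, hs, one_mul]

theorem psi_is_pruefer_angle_for_wronskian
    (I : Set ℝ) (hIc : I.OrdConnected)
    (u₀ v₀ u₁ : ℝ → Fin 2 → ℝ)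
    (hu₀c : ContinuousOn u₀ I) (hv₀c : ContinuousOn v₀ I) (hu₁c : ContinuousOn u₁ I)
    (hu₀nt : ∀ x ∈ I, u₀ x ≠ 0) (hv₀nt : ∀ x ∈ I, v₀ x ≠ 0) (hu₁nt : ∀ x ∈ I, u₁ x ≠ 0)
    (hW : ∀ x ∈ I, Wr u₀ v₀ x = 1)
    (R : ℝ → ℝ) (hR : ∀ x, R x = Real.sqrt (Wr u₀ u₁ x ^ 2 + Wr v₀ u₁ x ^ 2))
    (hRpos : ∀ x ∈ I, 0 < R x)
    (ψ : ℝ → ℝ) (hψc : ContinuousOn ψ I)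
    (hψ : ∀ x ∈ I, Wr u₀ u₁ x = -R x * Real.sin (ψ x) ∧ Wr v₀ u₁ x = -R x * Real.cos (ψ x)) :
    ∀ c ∈ I, ∀ d ∈ I, c < d →
      ∀ θ₀ θ₁ : ℝ → ℝ, IsPruefer I u₀ θ₀ → IsPruefer I u₁ θ₁ →
        ⌈ψ d / Real.pi⌉ - ⌊ψ c / Real.pi⌋ - 1 = numFlips θ₀ θ₁ c d := by
  intro c hc d hd hcd θ₀ θ₁ hP0 hP1
  obtain ⟨hθ₀c, hP0'⟩ := hP0
  obtain ⟨hθ₁c, hP1'⟩ := hP1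
  have hπ : (0:ℝ) < π := Real.pi_pos
  -- key pointwise facts
  have key : ∀ x ∈ I, ∃ t : ℝ, 0 < t ∧
      Real.sin (ψ x) = t * Real.sin (θ₁ x - θ₀ x) ∧
      (Real.sin (θ₁ x - θ₀ x) = 0 → Real.cos (ψ x) = Real.cos (θ₁ x - θ₀ x)) := by
    intro x hx
    obtain ⟨ρ₀, hρ₀, h00, h01⟩ := hP0' x hx
    obtain ⟨ρ₁, hρ₁, h10, h11⟩ := hP1' x hx
    have hRx := hRpos x hx
    have hWu : Wr u₀ u₁ x = -(ρ₀ * ρ₁) * Real.sin (θ₁ x - θ₀ x) := by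
      simp only [Wr, h00, h01, h10, h11, Real.sin_sub]
      ring
    have hWveq : Real.sin (θ₁ x - θ₀ x) = 0 →
        Wr v₀ u₁ x = -(ρ₁ / ρ₀ * Real.cos (θ₁ x - θ₀ x)) := by
      intro hΔ0
      have e1 : Real.sin (θ₁ x) = Real.sin (θ₀ x) * Real.cos (θ₁ x - θ₀ x) := by
        have h := Real.sin_add (θ₀ x) (θ₁ x - θ₀ x)
        rw [hΔ0] at h
        simpa using h
      have e2 : Real.cos (θ₁ x) = Real.cos (θ₀ x) * Real.cos (θ₁ x - θ₀ x) := by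
        have h := Real.cos_add (θ₀ x) (θ₁ x - θ₀ x)
        rw [hΔ0] at h
        simpa using h
      have hWv1 := hW x hx
      simp only [Wr, h00, h01] at hWv1
      simp only [Wr, h10, h11, e1, e2]
      field_simp
      linear_combination (-(Real.cos (θ₁ x - θ₀ x))) * hWv1
    obtain ⟨hs, hco⟩ := key_pt (Wr u₀ u₁ x) (Wr v₀ u₁ x) (R x) ρ₀ ρ₁ (ψ x) (θ₁ x) (θ₀ x)
      hρ₀ hρ₁ hRx hWu (hψ x hx).1 hWveq (hψ x hx).2
    exact ⟨ρ₀ * ρ₁ / R x, by positivity, hs, hco⟩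
  -- ψ - Δ never an odd multiple of π on I
  have hodd : ∀ x ∈ I, ∀ k : ℤ, ψ x - (θ₁ x - θ₀ x) ≠ (2 * (k:ℝ) + 1) * π := by
    intro x hx k hk
    obtain ⟨t, ht, hsin, hcos⟩ := key x hx
    have hψx : ψ x = (θ₁ x - θ₀ x) + ((2 * k + 1 : ℤ) : ℝ) * π := by push_cast; linarith
    have hpow : ((-1 : ℝ)) ^ (2 * k + 1 : ℤ) = -1 := Odd.neg_one_zpow ⟨k, by ring⟩
    have hs : Real.sin (ψ x) = -Real.sin (θ₁ x - θ₀ x) := by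
      rw [hψx, Real.sin_add_int_mul_pi, hpow]; ring
    have hΔ0 : Real.sin (θ₁ x - θ₀ x) = 0 := by nlinarith [hsin, hs]
    have hcc : Real.cos (ψ x) = -Real.cos (θ₁ x - θ₀ x) := by
      rw [hψx, Real.cos_add_int_mul_pi, hpow]; ring
    have := hcos hΔ0
    have hc0 : Real.cos (θ₁ x - θ₀ x) = 0 := by linarith [this, hcc]
    nlinarith [Real.sin_sq_add_cos_sq (θ₁ x - θ₀ x)]
  -- continuity of g on [c,d]
  have hsub : Icc c d ⊆ I := hIc.out hc hd
  have hgc : ContinuousOn (fun x => ψ x - (θ₁ x - θ₀ x)) (Icc c d) :=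
    ((hψc.sub (hθ₁c.sub hθ₀c)).mono hsub)
  set gc : ℝ := ψ c - (θ₁ c - θ₀ c) with hgcdef
  set gd : ℝ := ψ d - (θ₁ d - θ₀ d) with hgddef
  set n : ℤ := ⌊(gc + π) / (2 * π)⌋ with hn
  have hcb : (2 * (n:ℝ) - 1) * π < gc ∧ gc < (2 * (n:ℝ) + 1) * π := by
    have h1 : (n : ℝ) ≤ (gc + π) / (2 * π) := Int.floor_le _
    have h2 : (gc + π) / (2 * π) < n + 1 := Int.lt_floor_add_one _
    have h1' : (n : ℝ) * (2 * π) ≤ gc + π := by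
      calc (n:ℝ) * (2*π) ≤ ((gc + π)/(2*π)) * (2*π) := by nlinarith
      _ = gc + π := by field_simp
    have h2' : gc + π < ((n:ℝ) + 1) * (2 * π) := by
      calc gc + π = ((gc + π)/(2*π)) * (2*π) := by field_simp
      _ < ((n:ℝ)+1) * (2*π) := by nlinarith
    have hne : gc ≠ (2 * (n:ℝ) - 1) * π := by
      have h := hodd c hc (n - 1)
      rw [hgcdef]
      push_cast at h ⊢
      intro hh; exact h (by linarith)
    constructor
    · exact lt_of_le_of_ne (by nlinarith) (Ne.symm hne)
    · nlinarith
  have hdb : (2 * (n:ℝ) - 1) * π < gd ∧ gd < (2 * (n:ℝ) + 1) * π := by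
    constructor
    · by_contra hle
      push_neg at hle
      have hmem : (2 * (n:ℝ) - 1) * π ∈ Icc gd gc := ⟨hle, hcb.1.le⟩
      obtain ⟨x, hxm, hgx⟩ := intermediate_value_Icc' hcd.le hgc hmem
      have h := hodd x (hsub hxm) (n - 1)
      push_cast at h
      exact h (by simp only at hgx; linarith [hgx])
    · by_contra hle
      push_neg at hle
      have hmem : (2 * (n:ℝ) + 1) * π ∈ Icc gc gd := ⟨hcb.2.le, hle⟩
      obtain ⟨x, hxm, hgx⟩ := intermediate_value_Icc hcd.le hgc hmem
      have h := hodd x (hsub hxm) n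
      push_cast at h
      exact h (by simp only at hgx; linarith [hgx])
  -- apply ptwiseN at c and d
  obtain ⟨tc, htc, hsc, hcc⟩ := key c hc
  obtain ⟨td, htd, hsd, hcd'⟩ := key d hd
  have Hc := ptwiseN (ψ c) (θ₁ c - θ₀ c) tc n htc hsc hcc hcb.1 hcb.2
  have Hd := ptwiseN (ψ d) (θ₁ d - θ₀ d) td n htd hsd hcd' hdb.1 hdb.2
  rw [numFlips]
  omega
end

section
/- Let λ ∈ ℝ, let u₀, v₀ be solutions of τ_{φ₀} u = λ u on I with W_x(u₀, v₀) = 1 for all x, and let u₁ be a nontrivial solution of τ_{φ₁} u = λ u on I. Set R(x) = √(W_x(u₀,u₁)² + W_x(v₀,u₁)²) > 0 and let ψ : I → ℝ be locally absolutely continuous with W_x(u₀, u₁) = −R(x)·sin ψ(x) and W_x(v₀, u₁) = −R(x)·cos ψ(x) for all x ∈ I. Then for a.e. x ∈ I, ψ'(x) = −⟨u₀(x)·cos ψ(x) − v₀(x)·sin ψ(x), (φ₁(x) − φ₀(x))·(u₀(x)·cos ψ(x) − v₀(x)·sin ψ(x))⟩. -/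
open MeasureTheory Real Set

open Filter Metric
open scoped Topology

lemma ae_hasDerivAt_intervalIntegral {f : ℝ → ℝ} (hf : Integrable f volume) (c : ℝ) :
    ∀ᵐ x, HasDerivAt (fun y => ∫ t in c..y, f t) (f x) x := by
  filter_upwards [IsUnifLocDoublingMeasure.ae_tendsto_average_norm_sub (volume : Measure ℝ)
    hf.locallyIntegrable 1] with x hx
  rw [hasDerivAt_iff_tendsto_slope]
  have hδ : Tendsto (fun y : ℝ => |y - x|) (𝓝[≠] x) (𝓝[>] 0) := by
    apply tendsto_nhdsWithin_of_tendsto_nhds_of_eventually_within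
    · have : Tendsto (fun y : ℝ => |y - x|) (𝓝 x) (𝓝 |x - x|) :=
        ((continuous_id.sub continuous_const).abs.tendsto x)
      simpa using this.mono_left nhdsWithin_le_nhds
    · filter_upwards [self_mem_nhdsWithin] with y hy
      simpa [sub_eq_zero] using sub_ne_zero.2 hy
  have hmem : ∀ᶠ y in 𝓝[≠] x, x ∈ closedBall x (1 * |y - x|) := by
    filter_upwards with y
    simp [abs_nonneg]
  have H := hx (fun _ : ℝ => x) (fun y => |y - x|) hδ hmem
  simp only [Real.norm_eq_abs] at H
  have key : ∀ y : ℝ, y ≠ x →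
      |slope (fun y => ∫ t in c..y, f t) x y - f x| ≤
        2 * ⨍ t in closedBall x |y - x|, |f t - f x| := by
    intro y hy
    have hyx : y - x ≠ 0 := sub_ne_zero.2 hy
    have hyx' : (0:ℝ) < |y - x| := abs_pos.2 hyx
    have hii : ∀ a b : ℝ, IntervalIntegrable f volume a b := fun a b =>
      hf.intervalIntegrable
    have e1 : (∫ t in c..y, f t) - (∫ t in c..x, f t) = ∫ t in x..y, f t := by
      rw [← intervalIntegral.integral_add_adjacent_intervals (hii c x) (hii x y)]
      ring
    have hconst : IntervalIntegrable (fun _ : ℝ => f x) volume x y :=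
      intervalIntegrable_const
    have e2 : slope (fun y => ∫ t in c..y, f t) x y - f x
        = (∫ t in x..y, (f t - f x)) / (y - x) := by
      rw [slope_def_field, intervalIntegral.integral_sub (hii x y) hconst,
        intervalIntegral.integral_const]
      field_simp [e1]
      rw [e1, smul_eq_mul]
    have hintcb : IntegrableOn (fun t => |f t - f x|) (closedBall x |y - x|) volume := by
      apply Integrable.abs
      exact hf.integrableOn.sub (integrableOn_const measure_closedBall_lt_top.ne)
    have hsub : Set.uIoc x y ⊆ closedBall x |y - x| := by
      intro t ht
      rcases le_total x y with h | h
      · rw [uIoc_of_le h] at ht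
        rw [mem_closedBall, Real.dist_eq, abs_of_nonneg (sub_nonneg.2 h), abs_le]
        constructor <;> [linarith [ht.1]; linarith [ht.2]]
      · rw [uIoc_of_ge h] at ht
        rw [mem_closedBall, Real.dist_eq, abs_of_nonpos (sub_nonpos.2 h), abs_le]
        constructor <;> [linarith [ht.1]; linarith [ht.2]]
    have e3 : |∫ t in x..y, (f t - f x)| ≤ ∫ t in closedBall x |y - x|, |f t - f x| := by
      refine le_trans ?_ (setIntegral_mono_set hintcb ?_ (HasSubset.Subset.eventuallyLE hsub))
      · simpa [Real.norm_eq_abs] using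
          intervalIntegral.norm_integral_le_integral_norm_uIoc
            (f := fun t => f t - f x) (a := x) (b := y) (μ := volume)
      · filter_upwards with t using abs_nonneg _
    have e4 : (⨍ t in closedBall x |y - x|, |f t - f x|)
        = (2 * |y - x|)⁻¹ * ∫ t in closedBall x |y - x|, |f t - f x| := by
      rw [setAverage_eq, measureReal_def, Real.volume_closedBall, ENNReal.toReal_ofReal (by positivity)]
      simp [smul_eq_mul]
    rw [e2, abs_div, e4]
    rw [div_le_iff₀ hyx']
    have := e3
    calc |∫ t in x..y, (f t - f x)| ≤ ∫ t in closedBall x |y - x|, |f t - f x| := e3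
      _ = 2 * ((2 * |y - x|)⁻¹ * ∫ t in closedBall x |y - x|, |f t - f x|) * |y - x| := by
          field_simp
  have hT : Tendsto (fun y => slope (fun y => ∫ t in c..y, f t) x y - f x) (𝓝[≠] x) (𝓝 0) := by
    apply squeeze_zero_norm' _ (by simpa using H.const_mul 2)
    filter_upwards [self_mem_nhdsWithin] with y hy
    simpa [Real.norm_eq_abs] using key y hy
  simpa [tendsto_sub_nhds_zero_iff] using hT

lemma ae_of_forall_Ioo {I : Set ℝ} (hIo : IsOpen I) {P : ℝ → Prop}
    (h : ∀ a b : ℝ, a < b → Icc a b ⊆ I → ∀ᵐ x, x ∈ Ioo a b → P x) :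
    ∀ᵐ x, x ∈ I → P x := by
  have H : ∀ p : ℚ × ℚ, ∀ᵐ x, ((p.1 : ℝ) < p.2 ∧ Icc (p.1 : ℝ) p.2 ⊆ I) →
      (x ∈ Ioo (p.1 : ℝ) p.2 → P x) := by
    intro p
    by_cases hc : (p.1 : ℝ) < p.2 ∧ Icc (p.1 : ℝ) p.2 ⊆ I
    · filter_upwards [h p.1 p.2 hc.1 hc.2] with x hx _ using hx
    · filter_upwards with x hx using absurd hx hc
  rw [← ae_all_iff] at H
  filter_upwards [H] with x hx hxI
  obtain ⟨ε, εpos, hball⟩ := Metric.isOpen_iff.1 hIo x hxI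
  obtain ⟨a, ha1, ha2⟩ := exists_rat_btwn (show x - ε < x by linarith)
  obtain ⟨b, hb1, hb2⟩ := exists_rat_btwn (show x < x + ε by linarith)
  refine hx (a, b) ⟨by exact_mod_cast ha2.trans hb1, fun t ht => hball ?_⟩ ⟨ha2, hb1⟩
  rw [Real.ball_eq_Ioo]
  exact ⟨by linarith [ht.1], by linarith [ht.2]⟩

lemma ae_hasDerivAt_of_AC {I : Set ℝ} (hIo : IsOpen I) {F f : ℝ → ℝ}
    (h : ∀ c ∈ I, ∀ x ∈ I, IntervalIntegrable f volume c x ∧ F x = F c + ∫ t in c..x, f t) :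
    ∀ᵐ x, x ∈ I → HasDerivAt F (f x) x := by
  apply ae_of_forall_Ioo hIo
  intro a b hab hIcc
  have haI : a ∈ I := hIcc ⟨le_refl a, hab.le⟩
  have hbI : b ∈ I := hIcc ⟨hab.le, le_refl b⟩
  set g : ℝ → ℝ := (Ioo a b).indicator f with hg
  have hfint : IntegrableOn f (Ioo a b) volume :=
    ((h a haI b hbI).1.1).mono_set Ioo_subset_Ioc_self
  have hgint : Integrable g volume := by
    rw [hg, integrable_indicator_iff measurableSet_Ioo]
    exact hfint
  filter_upwards [ae_hasDerivAt_intervalIntegral hgint a] with x hx hxm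
  have hgx : g x = f x := indicator_of_mem hxm f
  have hev : F =ᶠ[𝓝 x] (fun y => F a + ∫ t in a..y, g t) := by
    filter_upwards [isOpen_Ioo.mem_nhds hxm] with y hy
    have hyI : y ∈ I := hIcc ⟨hy.1.le, hy.2.le⟩
    have h2 := (h a haI y hyI).2
    have : (∫ t in a..y, f t) = ∫ t in a..y, g t := by
      apply intervalIntegral.integral_congr_ae
      have : ∀ᵐ t : ℝ, t ≠ y := by
        exact (compl_mem_ae_iff (μ := (volume : Measure ℝ))).2
          (measure_singleton y)
      filter_upwards [this] with t ht htm
      rw [uIoc_of_le hy.1.le] at htm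
      have htmem : t ∈ Ioo a b := ⟨htm.1, lt_of_lt_of_le (lt_of_le_of_ne htm.2 ht) hy.2.le⟩
      exact (indicator_of_mem htmem f).symm
    rw [h2, this]
  rw [← hgx]
  exact ((hx.const_add (F a)).congr_of_eventuallyEq hev)

/-- A real function `f` is locally absolutely continuous on `I` with a.e. derivative `f'`. -/
def IsACDeriv₁ (I : Set ℝ) (f f' : ℝ → ℝ) : Prop :=
  ContinuousOn f I ∧
  ∀ c ∈ I, ∀ x ∈ I,
    IntervalIntegrable f' volume c x ∧ f x = f c + ∫ t in c..x, f' t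

theorem pruefer_angle_wronskian_ode
    (I : Set ℝ) (hIo : IsOpen I) (hIc : I.OrdConnected)
    (φ₀ φ₁ : ℝ → Matrix (Fin 2) (Fin 2) ℝ)
    (hs₀ : ∀ x ∈ I, (φ₀ x).IsSymm) (hs₁ : ∀ x ∈ I, (φ₁ x).IsSymm)
    (hi₀ : ∀ i j : Fin 2, LocallyIntegrableOn (fun x => φ₀ x i j) I volume)
    (hi₁ : ∀ i j : Fin 2, LocallyIntegrableOn (fun x => φ₁ x i j) I volume)
    (lam : ℝ) (u₀ v₀ u₁ : ℝ → Fin 2 → ℝ)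
    (hu₀ : IsDiracSolution I φ₀ lam u₀) (hv₀ : IsDiracSolution I φ₀ lam v₀)
    (hu₁ : IsDiracSolution I φ₁ lam u₁) (hu₁nt : ∀ x ∈ I, u₁ x ≠ 0)
    (hW : ∀ x ∈ I, Wr u₀ v₀ x = 1)
    (R : ℝ → ℝ) (hR : ∀ x, R x = Real.sqrt (Wr u₀ u₁ x ^ 2 + Wr v₀ u₁ x ^ 2))
    (hRpos : ∀ x ∈ I, 0 < R x)
    (ψ ψ' : ℝ → ℝ) (hψac : IsACDeriv₁ I ψ ψ')
    (hψ : ∀ x ∈ I, Wr u₀ u₁ x = -R x * Real.sin (ψ x) ∧ Wr v₀ u₁ x = -R x * Real.cos (ψ x)) :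
    ∀ᵐ x ∂volume, x ∈ I →
      ψ' x = -ip (fun i => Real.cos (ψ x) * u₀ x i - Real.sin (ψ x) * v₀ x i)
        ((φ₁ x - φ₀ x).mulVec (fun i => Real.cos (ψ x) * u₀ x i - Real.sin (ψ x) * v₀ x i)) := by
  obtain ⟨du₀, hu₀ac, hu₀ode⟩ := hu₀
  obtain ⟨dv₀, hv₀ac, hv₀ode⟩ := hv₀
  obtain ⟨du₁, hu₁ac, hu₁ode⟩ := hu₁
  have Hu₀ : ∀ i : Fin 2, ∀ᵐ x, x ∈ I → HasDerivAt (fun y => u₀ y i) (du₀ x i) x :=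
    fun i => ae_hasDerivAt_of_AC hIo (fun c hc x hx => hu₀ac.2 c hc x hx i)
  have Hv₀ : ∀ i : Fin 2, ∀ᵐ x, x ∈ I → HasDerivAt (fun y => v₀ y i) (dv₀ x i) x :=
    fun i => ae_hasDerivAt_of_AC hIo (fun c hc x hx => hv₀ac.2 c hc x hx i)
  have Hu₁ : ∀ i : Fin 2, ∀ᵐ x, x ∈ I → HasDerivAt (fun y => u₁ y i) (du₁ x i) x :=
    fun i => ae_hasDerivAt_of_AC hIo (fun c hc x hx => hu₁ac.2 c hc x hx i)
  have Hψ : ∀ᵐ x, x ∈ I → HasDerivAt ψ (ψ' x) x :=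
    ae_hasDerivAt_of_AC hIo hψac.2
  filter_upwards [Hu₀ 0, Hu₀ 1, Hv₀ 0, Hv₀ 1, Hu₁ 0, Hu₁ 1, Hψ, hu₀ode, hv₀ode, hu₁ode]
    with x d00 d01 d10 d11 d20 d21 dψ e₀ e₁ e₂ hxI
  -- pointwise derivatives
  replace d00 := d00 hxI; replace d01 := d01 hxI
  replace d10 := d10 hxI; replace d11 := d11 hxI
  replace d20 := d20 hxI; replace d21 := d21 hxI
  replace dψ := dψ hxI
  replace e₀ := e₀ hxI; replace e₁ := e₁ hxI; replace e₂ := e₂ hxI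
  set s := Real.sin (ψ x) with hs
  set co := Real.cos (ψ x) with hco
  -- component forms of the ODEs
  have oc : ∀ (M : ℝ → Matrix (Fin 2) (Fin 2) ℝ) (u du : ℝ → Fin 2 → ℝ),
      Jmat.mulVec (du x) + (M x).mulVec (u x) = lam • u x →
      (du x 0 = lam * u x 1 - (M x 1 0 * u x 0 + M x 1 1 * u x 1) ∧
       du x 1 = M x 0 0 * u x 0 + M x 0 1 * u x 1 - lam * u x 0) := by
    intro M u du he
    have h0 := congrFun he 0
    have h1 := congrFun he 1
    simp [Jmat, Matrix.mulVec, dotProduct, Fin.sum_univ_two, Matrix.vecHead, Matrix.vecTail] at h0 h1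
    constructor <;> linarith
  obtain ⟨o00, o01⟩ := oc φ₀ u₀ du₀ e₀
  obtain ⟨o10, o11⟩ := oc φ₀ v₀ dv₀ e₁
  obtain ⟨o20, o21⟩ := oc φ₁ u₁ du₁ e₂
  -- Wronskian values at x
  have hA := (hψ x hxI).1
  have hB := (hψ x hxI).2
  have hWx := hW x hxI
  simp only [Wr] at hA hB hWx
  -- expansion of u₁ in the basis u₀, v₀
  have w1 : u₁ x 0 = R x * co * u₀ x 0 - R x * s * v₀ x 0 := by
    linear_combination v₀ x 0 * hA - u₀ x 0 * hB - u₁ x 0 * hWx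
  have w2 : u₁ x 1 = R x * co * u₀ x 1 - R x * s * v₀ x 1 := by
    linear_combination v₀ x 1 * hA - u₀ x 1 * hB - u₁ x 1 * hWx
  -- derivative of the Wronskians by the product rule
  have hWr01 : Wr u₀ u₁ = fun y => u₀ y 0 * u₁ y 1 - u₀ y 1 * u₁ y 0 := rfl
  have hWr21 : Wr v₀ u₁ = fun y => v₀ y 0 * u₁ y 1 - v₀ y 1 * u₁ y 0 := rfl
  have hA_d : HasDerivAt (Wr u₀ u₁)
      (du₀ x 0 * u₁ x 1 + u₀ x 0 * du₁ x 1 - (du₀ x 1 * u₁ x 0 + u₀ x 1 * du₁ x 0)) x := by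
    rw [hWr01]; exact (d00.mul d21).sub (d01.mul d20)
  have hB_d : HasDerivAt (Wr v₀ u₁)
      (dv₀ x 0 * u₁ x 1 + v₀ x 0 * du₁ x 1 - (dv₀ x 1 * u₁ x 0 + v₀ x 1 * du₁ x 0)) x := by
    rw [hWr21]; exact (d10.mul d21).sub (d11.mul d20)
  -- derivative of R
  have hRfun : R = fun y => Real.sqrt (Wr u₀ u₁ y ^ 2 + Wr v₀ u₁ y ^ 2) := funext hR
  have hSne : Wr u₀ u₁ x ^ 2 + Wr v₀ u₁ x ^ 2 ≠ 0 := by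
    have := hRpos x hxI
    rw [hR x] at this
    exact (Real.sqrt_pos.mp this).ne'
  have hsum_d : HasDerivAt (fun y => Wr u₀ u₁ y ^ 2 + Wr v₀ u₁ y ^ 2)
      ((2 : ℕ) * Wr u₀ u₁ x ^ 1 *
        (du₀ x 0 * u₁ x 1 + u₀ x 0 * du₁ x 1 - (du₀ x 1 * u₁ x 0 + u₀ x 1 * du₁ x 0)) +
       (2 : ℕ) * Wr v₀ u₁ x ^ 1 *
        (dv₀ x 0 * u₁ x 1 + v₀ x 0 * du₁ x 1 - (dv₀ x 1 * u₁ x 0 + v₀ x 1 * du₁ x 0))) x :=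
    (hA_d.pow 2).add (hB_d.pow 2)
  have hR_d := (hsum_d.sqrt hSne)
  rw [← hRfun] at hR_d
  -- derivatives of the polar representations
  have hGA := (hR_d.neg.mul dψ.sin)
  have hGB := (hR_d.neg.mul dψ.cos)
  have hevA : Wr u₀ u₁ =ᶠ[nhds x] (fun y => -R y * Real.sin (ψ y)) := by
    filter_upwards [hIo.mem_nhds hxI] with y hy using (hψ y hy).1
  have hevB : Wr v₀ u₁ =ᶠ[nhds x] (fun y => -R y * Real.cos (ψ y)) := by
    filter_upwards [hIo.mem_nhds hxI] with y hy using (hψ y hy).2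
  have eq1 := hA_d.unique (hGA.congr_of_eventuallyEq hevA)
  have eq2 := hB_d.unique (hGB.congr_of_eventuallyEq hevB)
  rw [← hs] at eq1 eq2
  rw [← hco] at eq1 eq2
  simp only [Wr] at eq1 eq2
  have h1 : R x * ψ' x =
      s * (dv₀ x 0 * u₁ x 1 + v₀ x 0 * du₁ x 1 - (dv₀ x 1 * u₁ x 0 + v₀ x 1 * du₁ x 0)) -
      co * (du₀ x 0 * u₁ x 1 + u₀ x 0 * du₁ x 1 - (du₀ x 1 * u₁ x 0 + u₀ x 1 * du₁ x 0)) := by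
    have pyth : s ^ 2 + co ^ 2 = 1 := by rw [hs, hco]; exact Real.sin_sq_add_cos_sq (ψ x)
    simp only [Pi.neg_apply] at eq1 eq2
    linear_combination co * eq1 - s * eq2 - (R x * ψ' x) * pyth
  rw [o00, o01, o10, o11, o20, o21, w1, w2] at h1
  have hsym : φ₀ x 1 0 = φ₀ x 0 1 := (hs₀ x hxI).apply 0 1
  rw [hsym] at h1
  -- final computation
  simp only [ip, Matrix.mulVec, dotProduct, Matrix.sub_apply, Fin.sum_univ_two]
  rw [hsym]
  apply mul_left_cancel₀ (ne_of_gt (hRpos x hxI))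
  rw [h1]; ring
end

section
/- Let [a, b] be compact, φ₀, φ₁ integrable on [a, b], and for ε ∈ [0, 1] set φ_ε = φ₀ + ε·(φ₁ − φ₀). Fix β ∈ ℝ and let u : [0,1] × [a,b] → ℝ², (ε, x) ↦ u_ε(x), be continuously differentiable such that for each ε ∈ [0,1], u_ε is a solution of τ_{φ_ε} u_ε = 0 with u_ε(b) = (sin β, cos β). Then for all ε ∈ [0,1] and x ∈ [a,b], W_x(u_ε, ∂_ε u_ε) = ∫_x^b ⟨u_ε(r), (φ₀(r) − φ₁(r)) u_ε(r)⟩ dr. Similarly, if instead u_ε(a) = (sin α, cos α) for a fixed α ∈ ℝ and all ε, then W_x(u_ε, ∂_ε u_ε) = −∫_a^x ⟨u_ε(r), (φ₀(r) − φ₁(r)) u_ε(r)⟩ dr. -/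
open MeasureTheory Real Set Topology Filter

lemma fubini_core {c d : ℝ} {f g : ℝ → ℝ}
    (hf : IntegrableOn f (Ioc c d)) (hg : IntegrableOn g (Ioc c d)) :
    (∫ t in Ioc c d, f t) * (∫ s in Ioc c d, g s) =
      (∫ t in Ioc c d, f t * ∫ s in Ioc c t, g s) +
        ∫ t in Ioc c d, (∫ s in Ioc c t, f s) * g t := by
  have hmeas : MeasurableSet {q : ℝ × ℝ | q.1 < q.2} :=
    measurableSet_lt measurable_fst measurable_snd
  set μ := volume.restrict (Ioc c d) with hμ
  have hprod : Integrable (fun p : ℝ × ℝ => f p.1 * g p.2) (μ.prod μ) := hf.mul_prod hg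
  have hind : Integrable ({q : ℝ × ℝ | q.1 < q.2}.indicator (fun q => f q.1 * g q.2))
      (μ.prod μ) := hprod.indicator hmeas
  have swap := MeasureTheory.integral_integral_swap
    (f := fun t s => {q : ℝ × ℝ | q.1 < q.2}.indicator (fun q => f q.1 * g q.2) (t, s))
    (by exact hind)
  -- left side of swap
  have hL : ∀ t ∈ Ioc c d,
      (∫ s, {q : ℝ × ℝ | q.1 < q.2}.indicator (fun q => f q.1 * g q.2) (t, s) ∂μ)
        = f t * ∫ s in Ioc t d, g s := by
    intro t ht
    have : (fun s => {q : ℝ × ℝ | q.1 < q.2}.indicator (fun q => f q.1 * g q.2) (t, s))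
        = fun s => (Ioi t).indicator (fun s => f t * g s) s := by
      ext s
      by_cases h : t < s <;> simp [Set.indicator, h, Set.mem_Ioi]
    rw [this, integral_indicator measurableSet_Ioi, hμ,
      Measure.restrict_restrict measurableSet_Ioi]
    have : Ioi t ∩ Ioc c d = Ioc t d := by
      ext s; simp only [mem_inter_iff, mem_Ioi, mem_Ioc]
      constructor
      · rintro ⟨h1, _, h3⟩; exact ⟨h1, h3⟩
      · rintro ⟨h1, h3⟩; exact ⟨h1, ht.1.trans h1, h3⟩
    rw [this, integral_const_mul]
  -- right side of swap
  have hR : ∀ s ∈ Ioc c d,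
      (∫ t, {q : ℝ × ℝ | q.1 < q.2}.indicator (fun q => f q.1 * g q.2) (t, s) ∂μ)
        = (∫ t in Ioc c s, f t) * g s := by
    intro s hs
    have : (fun t => {q : ℝ × ℝ | q.1 < q.2}.indicator (fun q => f q.1 * g q.2) (t, s))
        = fun t => (Iio s).indicator (fun t => f t * g s) t := by
      ext t
      by_cases h : t < s <;> simp [Set.indicator, h, Set.mem_Iio]
    rw [this, integral_indicator measurableSet_Iio, hμ,
      Measure.restrict_restrict measurableSet_Iio]
    have h2 : Iio s ∩ Ioc c d = Ioo c s := by
      ext t; simp only [mem_inter_iff, mem_Iio, mem_Ioc, mem_Ioo]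
      constructor
      · rintro ⟨h1, h3, _⟩; exact ⟨h3, h1⟩
      · rintro ⟨h3, h1⟩; exact ⟨h1, h3, (le_of_lt h1).trans hs.2⟩
    rw [h2, ← integral_Ioc_eq_integral_Ioo, integral_mul_const]
  -- rewrite swap using hL and hR
  have hgIcc : IntegrableOn g (Icc c d) := by rwa [integrableOn_Icc_iff_integrableOn_Ioc]
  have hfIcc : IntegrableOn f (Icc c d) := by rwa [integrableOn_Icc_iff_integrableOn_Ioc]
  have hGcont : ContinuousOn (fun t => ∫ s in Ioc c t, g s) (Icc c d) :=
    intervalIntegral.continuousOn_primitive hgIcc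
  have hFcont : ContinuousOn (fun t => ∫ s in Ioc c t, f s) (Icc c d) :=
    intervalIntegral.continuousOn_primitive hfIcc
  -- integrability of products
  have hfin1 : Integrable (fun t => f t * ∫ s in Ioc c t, g s) μ := by
    have := hf.mul_continuousOn_of_subset hGcont measurableSet_Ioc isCompact_Icc
      Ioc_subset_Icc_self
    exact this
  have hfin2 : Integrable (fun t => (∫ s in Ioc c t, f s) * g t) μ := by
    have := hg.continuousOn_mul_of_subset hFcont isCompact_Icc measurableSet_Ioc
      Ioc_subset_Icc_self
    exact this
  -- ∫ over Ioc t d = total - ∫ over Ioc c t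
  have hsplit : ∀ t ∈ Ioc c d,
      ∫ s in Ioc t d, g s = (∫ s in Ioc c d, g s) - ∫ s in Ioc c t, g s := by
    intro t ht
    have hdisj : Disjoint (Ioc c t) (Ioc t d) := Ioc_disjoint_Ioc_of_le le_rfl
    have hunion : Ioc c t ∪ Ioc t d = Ioc c d := Ioc_union_Ioc_eq_Ioc ht.1.le ht.2
    have := setIntegral_union hdisj measurableSet_Ioc
      (hg.mono_set (by rw [← hunion]; exact subset_union_left))
      (hg.mono_set (by rw [← hunion]; exact subset_union_right))
    rw [hunion] at this
    rw [this]; ring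
  have eqL : (∫ t, (∫ s, {q : ℝ × ℝ | q.1 < q.2}.indicator (fun q => f q.1 * g q.2) (t, s) ∂μ) ∂μ)
      = (∫ t in Ioc c d, f t) * (∫ s in Ioc c d, g s)
        - ∫ t in Ioc c d, f t * ∫ s in Ioc c t, g s := by
    have : (∫ t, (∫ s, {q : ℝ × ℝ | q.1 < q.2}.indicator (fun q => f q.1 * g q.2) (t, s) ∂μ) ∂μ)
        = ∫ t in Ioc c d, (f t * (∫ s in Ioc c d, g s) - f t * ∫ s in Ioc c t, g s) := by
      refine setIntegral_congr_ae measurableSet_Ioc ?_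
      filter_upwards with t ht
      rw [hL t ht, hsplit t ht]; ring
    rw [this, integral_sub (hf.mul_const _) hfin1, ← integral_mul_const]
  have eqR : (∫ s, (∫ t, {q : ℝ × ℝ | q.1 < q.2}.indicator (fun q => f q.1 * g q.2) (t, s) ∂μ) ∂μ)
      = ∫ t in Ioc c d, (∫ s in Ioc c t, f s) * g t := by
    refine setIntegral_congr_ae measurableSet_Ioc ?_
    filter_upwards with s hs
    exact hR s hs
  rw [eqL, eqR] at swap
  linarith

lemma prodFTC {c d : ℝ} (hcd : c ≤ d) {f g F G : ℝ → ℝ}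
    (hf : IntervalIntegrable f volume c d) (hg : IntervalIntegrable g volume c d)
    (hF : ∀ t ∈ Icc c d, F t = F c + ∫ s in c..t, f s)
    (hG : ∀ t ∈ Icc c d, G t = G c + ∫ s in c..t, g s) :
    F d * G d - F c * G c = ∫ t in c..d, (f t * G t + F t * g t) := by
  have hf' : IntegrableOn f (Ioc c d) := hf.1
  have hg' : IntegrableOn g (Ioc c d) := hg.1
  have hgIcc : IntegrableOn g (Icc c d) := by rwa [integrableOn_Icc_iff_integrableOn_Ioc]
  have hfIcc : IntegrableOn f (Icc c d) := by rwa [integrableOn_Icc_iff_integrableOn_Ioc]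
  have hGcont : ContinuousOn (fun t => ∫ s in Ioc c t, g s) (Icc c d) :=
    intervalIntegral.continuousOn_primitive hgIcc
  have hFcont : ContinuousOn (fun t => ∫ s in Ioc c t, f s) (Icc c d) :=
    intervalIntegral.continuousOn_primitive hfIcc
  have hfin1 : Integrable (fun t => f t * ∫ s in Ioc c t, g s)
      (volume.restrict (Ioc c d)) :=
    hf'.mul_continuousOn_of_subset hGcont measurableSet_Ioc isCompact_Icc Ioc_subset_Icc_self
  have hfin2 : Integrable (fun t => (∫ s in Ioc c t, f s) * g t)
      (volume.restrict (Ioc c d)) :=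
    hg'.continuousOn_mul_of_subset hFcont isCompact_Icc measurableSet_Ioc Ioc_subset_Icc_self
  have key := fubini_core hf' hg'
  rw [intervalIntegral.integral_of_le hcd]
  have e1 : ∫ t in Ioc c d, (f t * G t + F t * g t) =
      ∫ t in Ioc c d, ((f t * G c + f t * ∫ s in Ioc c t, g s) +
        (F c * g t + (∫ s in Ioc c t, f s) * g t)) := by
    refine setIntegral_congr_ae measurableSet_Ioc ?_
    filter_upwards with t ht
    rw [hG t (Ioc_subset_Icc_self ht), hF t (Ioc_subset_Icc_self ht),
      intervalIntegral.integral_of_le ht.1.le, intervalIntegral.integral_of_le ht.1.le]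
    ring
  have add1 : ∫ t in Ioc c d, ((f t * G c + f t * ∫ s in Ioc c t, g s) +
        (F c * g t + (∫ s in Ioc c t, f s) * g t)) =
      (∫ t in Ioc c d, (f t * G c + f t * ∫ s in Ioc c t, g s)) +
        ∫ t in Ioc c d, (F c * g t + (∫ s in Ioc c t, f s) * g t) :=
    integral_add ((hf'.mul_const _).add hfin1) ((hg'.const_mul _).add hfin2)
  have add2 : ∫ t in Ioc c d, (f t * G c + f t * ∫ s in Ioc c t, g s) =
      (∫ t in Ioc c d, f t * G c) + ∫ t in Ioc c d, f t * ∫ s in Ioc c t, g s :=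
    integral_add (hf'.mul_const _) hfin1
  have add3 : ∫ t in Ioc c d, (F c * g t + (∫ s in Ioc c t, f s) * g t) =
      (∫ t in Ioc c d, F c * g t) + ∫ t in Ioc c d, (∫ s in Ioc c t, f s) * g t :=
    integral_add (hg'.const_mul _) hfin2
  have m1 : ∫ t in Ioc c d, f t * G c = (∫ t in Ioc c d, f t) * G c :=
    integral_mul_const _ _
  have m2 : ∫ t in Ioc c d, F c * g t = F c * ∫ t in Ioc c d, g t :=
    integral_const_mul _ _
  rw [e1, add1, add2, add3, m1, m2, hF d ⟨hcd, le_refl d⟩, hG d ⟨hcd, le_refl d⟩,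
    intervalIntegral.integral_of_le hcd, intervalIntegral.integral_of_le hcd]
  linear_combination key

lemma prodFTC' {c x : ℝ} {f g F G : ℝ → ℝ}
    (hf : IntervalIntegrable f volume c x) (hg : IntervalIntegrable g volume c x)
    (hF : ∀ t ∈ uIcc c x, F t = F c + ∫ s in c..t, f s)
    (hG : ∀ t ∈ uIcc c x, G t = G c + ∫ s in c..t, g s) :
    F x * G x - F c * G c = ∫ t in c..x, (f t * G t + F t * g t) := by
  rcases le_total c x with h | h
  · exact prodFTC h hf hg (by rwa [uIcc_of_le h] at hF) (by rwa [uIcc_of_le h] at hG)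
  · have hf' : IntervalIntegrable f volume x c := hf.symm
    have hg' : IntervalIntegrable g volume x c := hg.symm
    have hx : x ∈ uIcc c x := right_mem_uIcc
    have repF : ∀ t ∈ Icc x c, F t = F x + ∫ s in x..t, f s := by
      intro t ht
      have ht' : t ∈ uIcc c x := by rw [uIcc_of_ge h]; exact ht
      have hadd : (∫ s in x..c, f s) + ∫ s in c..t, f s = ∫ s in x..t, f s :=
        intervalIntegral.integral_add_adjacent_intervals hf'
          (hf.mono_set (uIcc_subset_uIcc left_mem_uIcc ht'))
      rw [hF t ht', hF x hx, ← hadd, intervalIntegral.integral_symm c x]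
      ring
    have repG : ∀ t ∈ Icc x c, G t = G x + ∫ s in x..t, g s := by
      intro t ht
      have ht' : t ∈ uIcc c x := by rw [uIcc_of_ge h]; exact ht
      have hadd : (∫ s in x..c, g s) + ∫ s in c..t, g s = ∫ s in x..t, g s :=
        intervalIntegral.integral_add_adjacent_intervals hg'
          (hg.mono_set (uIcc_subset_uIcc left_mem_uIcc ht'))
      rw [hG t ht', hG x hx, ← hadd, intervalIntegral.integral_symm c x]
      ring
    have := prodFTC h hf' hg' repF repG
    rw [intervalIntegral.integral_symm x c, ← this]
    ring

lemma pointwiseD {M0 M1 : Matrix (Fin 2) (Fin 2) ℝ} {ε δ : ℝ}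
    {vε vδ wε wδ : Fin 2 → ℝ}
    (hε : Jmat.mulVec wε + (M0 + ε • (M1 - M0)).mulVec vε = (0:ℝ) • vε)
    (hδ : Jmat.mulVec wδ + (M0 + δ • (M1 - M0)).mulVec vδ = (0:ℝ) • vδ)
    (h0 : M0.IsSymm) (h1 : M1.IsSymm) :
    wε 0 * vδ 1 + vε 0 * wδ 1 - (wε 1 * vδ 0 + vε 1 * wδ 0)
      = (δ - ε) * ip vε ((M1 - M0).mulVec vδ) := by
  have s0 : M0 1 0 = M0 0 1 := h0.apply 0 1
  have s1 : M1 1 0 = M1 0 1 := h1.apply 0 1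
  have e0 := congrFun hε 0
  have e1 := congrFun hε 1
  have d0 := congrFun hδ 0
  have d1 := congrFun hδ 1
  simp only [Jmat, Matrix.mulVec, dotProduct, Fin.sum_univ_two,
    Matrix.of_apply, Matrix.cons_val', Matrix.cons_val_zero, Matrix.cons_val_one,
    Matrix.head_cons, Matrix.head_fin_const, Matrix.empty_val', Matrix.cons_val_fin_one,
    Matrix.add_apply, Matrix.sub_apply, Matrix.smul_apply, smul_eq_mul,
    Pi.add_apply, Pi.smul_apply, Pi.zero_apply, zero_mul, zero_smul,
    zero_add, neg_mul, one_mul, neg_one_mul, add_zero] at e0 e1 d0 d1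
  simp only [ip, Matrix.mulVec, dotProduct, Fin.sum_univ_two, Matrix.sub_apply]
  have hw0 : wε 0 = -((M0 1 0 + ε * (M1 1 0 - M0 1 0)) * vε 0
      + (M0 1 1 + ε * (M1 1 1 - M0 1 1)) * vε 1) := by linarith
  have hw1 : wε 1 = (M0 0 0 + ε * (M1 0 0 - M0 0 0)) * vε 0
      + (M0 0 1 + ε * (M1 0 1 - M0 0 1)) * vε 1 := by linarith
  have hd0 : wδ 0 = -((M0 1 0 + δ * (M1 1 0 - M0 1 0)) * vδ 0
      + (M0 1 1 + δ * (M1 1 1 - M0 1 1)) * vδ 1) := by linarith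
  have hd1 : wδ 1 = (M0 0 0 + δ * (M1 0 0 - M0 0 0)) * vδ 0
      + (M0 0 1 + δ * (M1 0 1 - M0 0 1)) * vδ 1 := by linarith
  rw [hw0, hw1, hd0, hd1, s0, s1]
  ring

lemma key (a b : ℝ) (hab : a ≤ b)
    (φ₀ φ₁ : ℝ → Matrix (Fin 2) (Fin 2) ℝ)
    (hs₀ : ∀ x ∈ Set.Icc a b, (φ₀ x).IsSymm) (hs₁ : ∀ x ∈ Set.Icc a b, (φ₁ x).IsSymm)
    (hi₀ : ∀ i j : Fin 2, IntegrableOn (fun x => φ₀ x i j) (Set.Icc a b) volume)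
    (hi₁ : ∀ i j : Fin 2, IntegrableOn (fun x => φ₁ x i j) (Set.Icc a b) volume)
    (u uε : ℝ → ℝ → Fin 2 → ℝ)
    (huc : ∀ i : Fin 2, ContinuousOn (fun p : ℝ × ℝ => u p.1 p.2 i)
      (Set.Icc 0 1 ×ˢ Set.Icc a b))
    (hder : ∀ ε ∈ Set.Icc (0:ℝ) 1, ∀ x ∈ Set.Icc a b, ∀ i : Fin 2,
      HasDerivAt (fun e => u e x i) (uε ε x i) ε)
    (hsol : ∀ ε ∈ Set.Icc (0:ℝ) 1,
      IsDiracSolution (Set.Icc a b) (fun x => φ₀ x + ε • (φ₁ x - φ₀ x)) 0 (u ε))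
    (ε : ℝ) (hε : ε ∈ Set.Icc (0:ℝ) 1)
    (c : ℝ) (hc : c ∈ Set.Icc a b)
    (hbc : ∀ δ ∈ Set.Icc (0:ℝ) 1, u δ c = u ε c)
    (x : ℝ) (hx : x ∈ Set.Icc a b) :
    Wr (u ε) (uε ε) x = ∫ t in c..x, ip (u ε t) ((φ₁ t - φ₀ t).mulVec (u ε t)) := by
  classical
  have hsub : uIcc c x ⊆ Icc a b := by
    rw [← uIcc_of_le hab]
    exact uIcc_subset_uIcc (by rw [uIcc_of_le hab]; exact hc)
      (by rw [uIcc_of_le hab]; exact hx)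
  have hIsub : uIoc c x ⊆ Icc a b := uIoc_subset_uIcc.trans hsub
  -- choice of derivatives
  set w : ℝ → ℝ → Fin 2 → ℝ :=
    fun δ => if h : δ ∈ Icc (0:ℝ) 1 then (hsol δ h).choose else 0 with hw
  have hwAC : ∀ δ (hδ : δ ∈ Icc (0:ℝ) 1), IsACDeriv (Icc a b) (u δ) (w δ) := by
    intro δ hδ
    rw [hw]; simp only [dif_pos hδ]; exact (hsol δ hδ).choose_spec.1
  have hwEq : ∀ δ (hδ : δ ∈ Icc (0:ℝ) 1), ∀ᵐ t ∂volume, t ∈ Icc a b →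
      Jmat.mulVec (w δ t) + (φ₀ t + δ • (φ₁ t - φ₀ t)).mulVec (u δ t) = (0:ℝ) • u δ t := by
    intro δ hδ
    rw [hw]; simp only [dif_pos hδ]; exact (hsol δ hδ).choose_spec.2
  -- continuity in t for fixed δ
  have hcont : ∀ δ ∈ Icc (0:ℝ) 1, ∀ i : Fin 2,
      ContinuousOn (fun t => u δ t i) (Icc a b) := by
    intro δ hδ i
    exact (huc i).comp ((continuous_const.prodMk continuous_id).continuousOn)
      (fun t ht => mk_mem_prod hδ ht)
  set Φ : ℝ → ℝ :=
    fun δ => ∫ t in c..x, ip (u ε t) ((φ₁ t - φ₀ t).mulVec (u δ t)) with hΦ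
  -- Green identity
  have hGreen : ∀ δ ∈ Icc (0:ℝ) 1, Wr (u ε) (u δ) x = (δ - ε) * Φ δ := by
    intro δ hδ
    obtain ⟨hcε, hrepε⟩ := hwAC ε hε
    obtain ⟨hcδ, hrepδ⟩ := hwAC δ hδ
    have int_wε : ∀ i, IntervalIntegrable (fun t => w ε t i) volume c x :=
      fun i => (hrepε c hc x hx i).1
    have int_wδ : ∀ i, IntervalIntegrable (fun t => w δ t i) volume c x :=
      fun i => (hrepδ c hc x hx i).1
    have P1 := prodFTC' (F := fun t => u ε t 0) (G := fun t => u δ t 1)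
      (int_wε 0) (int_wδ 1)
      (fun t ht => (hrepε c hc t (hsub ht) 0).2)
      (fun t ht => (hrepδ c hc t (hsub ht) 1).2)
    have P2 := prodFTC' (F := fun t => u ε t 1) (G := fun t => u δ t 0)
      (int_wε 1) (int_wδ 0)
      (fun t ht => (hrepε c hc t (hsub ht) 1).2)
      (fun t ht => (hrepδ c hc t (hsub ht) 0).2)
    have i1 : IntervalIntegrable
        (fun t => w ε t 0 * u δ t 1 + u ε t 0 * w δ t 1) volume c x :=
      ((int_wε 0).mul_continuousOn ((hcont δ hδ 1).mono hsub)).add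
        ((int_wδ 1).continuousOn_mul ((hcont ε hε 0).mono hsub))
    have i2 : IntervalIntegrable
        (fun t => w ε t 1 * u δ t 0 + u ε t 1 * w δ t 0) volume c x :=
      ((int_wε 1).mul_continuousOn ((hcont δ hδ 0).mono hsub)).add
        ((int_wδ 0).continuousOn_mul ((hcont ε hε 1).mono hsub))
    have hsubint := intervalIntegral.integral_sub i1 i2
    have hcongr : ∫ t in c..x,
        ((w ε t 0 * u δ t 1 + u ε t 0 * w δ t 1)
          - (w ε t 1 * u δ t 0 + u ε t 1 * w δ t 0)) =
        ∫ t in c..x, (δ - ε) * ip (u ε t) ((φ₁ t - φ₀ t).mulVec (u δ t)) := by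
      apply intervalIntegral.integral_congr_ae
      filter_upwards [hwEq ε hε, hwEq δ hδ] with t htε htδ ht
      exact pointwiseD (htε (hIsub ht)) (htδ (hIsub ht))
        (hs₀ t (hIsub ht)) (hs₁ t (hIsub ht))
    have h0 : u δ c 0 = u ε c 0 := by rw [hbc δ hδ]
    have h1 : u δ c 1 = u ε c 1 := by rw [hbc δ hδ]
    have : Wr (u ε) (u δ) x =
        (u ε x 0 * u δ x 1 - u ε c 0 * u δ c 1)
          - (u ε x 1 * u δ x 0 - u ε c 1 * u δ c 0) := by
      simp only [Wr, h0, h1]; ring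
    rw [this, P1, P2, ← hsubint, hcongr, intervalIntegral.integral_const_mul]
  -- uniform bound M
  obtain ⟨M, hM⟩ : ∃ M, ∀ δ ∈ Icc (0:ℝ) 1, ∀ t ∈ Icc a b, ∀ i : Fin 2,
      |u δ t i| ≤ M := by
    obtain ⟨M0, hM0⟩ := (isCompact_Icc.prod isCompact_Icc).exists_bound_of_continuousOn (huc 0)
    obtain ⟨M1, hM1⟩ := (isCompact_Icc.prod isCompact_Icc).exists_bound_of_continuousOn (huc 1)
    refine ⟨max M0 M1, fun δ hδ t ht i => ?_⟩
    fin_cases i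
    · exact le_trans (hM0 (δ, t) (mk_mem_prod hδ ht)) (le_max_left _ _)
    · exact le_trans (hM1 (δ, t) (mk_mem_prod hδ ht)) (le_max_right _ _)
  have hM0 : 0 ≤ M := le_trans (abs_nonneg _)
    (hM 0 (by norm_num) a (left_mem_Icc.2 hab) 0)
  -- bound function
  have hdint : ∀ i j : Fin 2, IntegrableOn (fun t => φ₁ t i j - φ₀ t i j) (Icc a b) volume :=
    fun i j => (hi₁ i j).sub (hi₀ i j)
  have hS : IntegrableOn (fun t => |φ₁ t 0 0 - φ₀ t 0 0| + |φ₁ t 0 1 - φ₀ t 0 1|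
      + |φ₁ t 1 0 - φ₀ t 1 0| + |φ₁ t 1 1 - φ₀ t 1 1|) (Icc a b) volume := by
    exact (((hdint 0 0).abs.add (hdint 0 1).abs).add ((hdint 1 0).abs)).add ((hdint 1 1).abs)
  have hbound_int : IntervalIntegrable (fun t => M * (|φ₁ t 0 0 - φ₀ t 0 0|
      + |φ₁ t 0 1 - φ₀ t 0 1| + |φ₁ t 1 0 - φ₀ t 1 0| + |φ₁ t 1 1 - φ₀ t 1 1|) * M)
      volume c x := by
    rw [intervalIntegrable_iff]
    exact ((hS.mono_set hIsub).const_mul M).mul_const M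
  have expand : ∀ δ t, ip (u ε t) ((φ₁ t - φ₀ t).mulVec (u δ t)) =
      u ε t 0 * (φ₁ t 0 0 - φ₀ t 0 0) * u δ t 0
      + u ε t 0 * (φ₁ t 0 1 - φ₀ t 0 1) * u δ t 1
      + u ε t 1 * (φ₁ t 1 0 - φ₀ t 1 0) * u δ t 0
      + u ε t 1 * (φ₁ t 1 1 - φ₀ t 1 1) * u δ t 1 := by
    intro δ t
    simp only [ip, Matrix.mulVec, dotProduct, Fin.sum_univ_two, Matrix.sub_apply]
    ring
  -- continuity of Φ within Icc 0 1 at ε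
  have hΦcont : ContinuousWithinAt Φ (Icc 0 1) ε := by
    rw [hΦ]
    apply intervalIntegral.continuousWithinAt_of_dominated_interval
      (bound := fun t => M * (|φ₁ t 0 0 - φ₀ t 0 0| + |φ₁ t 0 1 - φ₀ t 0 1|
        + |φ₁ t 1 0 - φ₀ t 1 0| + |φ₁ t 1 1 - φ₀ t 1 1|) * M)
    · filter_upwards [eventually_mem_nhdsWithin] with δ hδ
      have hu : ∀ γ, γ ∈ Icc (0:ℝ) 1 → ∀ i : Fin 2, AEStronglyMeasurable
          (fun t => u γ t i) (volume.restrict (uIoc c x)) := fun γ hγ i =>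
        ContinuousOn.aestronglyMeasurable ((hcont γ hγ i).mono hIsub) measurableSet_uIoc
      have hφm : ∀ i j : Fin 2, AEStronglyMeasurable
          (fun t => φ₁ t i j - φ₀ t i j) (volume.restrict (uIoc c x)) := fun i j =>
        (hdint i j).aestronglyMeasurable.mono_measure (Measure.restrict_mono hIsub le_rfl)
      have : AEStronglyMeasurable (fun t =>
          u ε t 0 * (φ₁ t 0 0 - φ₀ t 0 0) * u δ t 0
          + u ε t 0 * (φ₁ t 0 1 - φ₀ t 0 1) * u δ t 1
          + u ε t 1 * (φ₁ t 1 0 - φ₀ t 1 0) * u δ t 0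
          + u ε t 1 * (φ₁ t 1 1 - φ₀ t 1 1) * u δ t 1)
          (volume.restrict (uIoc c x)) :=
        ((((((hu ε hε 0).mul (hφm 0 0)).mul (hu δ hδ 0)).add
          (((hu ε hε 0).mul (hφm 0 1)).mul (hu δ hδ 1))).add
          (((hu ε hε 1).mul (hφm 1 0)).mul (hu δ hδ 0))).add
          (((hu ε hε 1).mul (hφm 1 1)).mul (hu δ hδ 1)))
      exact this.congr (by filter_upwards with t; rw [expand δ t])
    · filter_upwards [eventually_mem_nhdsWithin] with δ hδ
      filter_upwards with t ht
      have htI := hIsub ht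
      have b1 : ∀ γ, γ ∈ Icc (0:ℝ) 1 → ∀ i : Fin 2, |u γ t i| ≤ M :=
        fun γ hγ i => hM γ hγ t htI i
      rw [Real.norm_eq_abs, expand δ t]
      have habs : |u ε t 0 * (φ₁ t 0 0 - φ₀ t 0 0) * u δ t 0
          + u ε t 0 * (φ₁ t 0 1 - φ₀ t 0 1) * u δ t 1
          + u ε t 1 * (φ₁ t 1 0 - φ₀ t 1 0) * u δ t 0
          + u ε t 1 * (φ₁ t 1 1 - φ₀ t 1 1) * u δ t 1|
          ≤ |u ε t 0 * (φ₁ t 0 0 - φ₀ t 0 0) * u δ t 0|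
          + |u ε t 0 * (φ₁ t 0 1 - φ₀ t 0 1) * u δ t 1|
          + |u ε t 1 * (φ₁ t 1 0 - φ₀ t 1 0) * u δ t 0|
          + |u ε t 1 * (φ₁ t 1 1 - φ₀ t 1 1) * u δ t 1| := by
        exact (abs_add_le _ _).trans (add_le_add ((abs_add_le _ _).trans
          (add_le_add (abs_add_le _ _) le_rfl)) le_rfl)
      have hterm : ∀ (i j : Fin 2),
          |u ε t i * (φ₁ t i j - φ₀ t i j) * u δ t j|
            ≤ M * |φ₁ t i j - φ₀ t i j| * M := by
        intro i j
        rw [abs_mul, abs_mul]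
        have h1 := b1 ε hε i
        have h2 := b1 δ hδ j
        have h3 := abs_nonneg (u ε t i)
        have h4 := abs_nonneg (u δ t j)
        have h5 := abs_nonneg (φ₁ t i j - φ₀ t i j)
        have h6 : |u ε t i| * |u δ t j| ≤ M * M := mul_le_mul h1 h2 h4 hM0
        nlinarith [mul_le_mul_of_nonneg_left h6 h5]
      refine habs.trans (le_of_le_of_eq (add_le_add (add_le_add (add_le_add
        (hterm 0 0) (hterm 0 1)) (hterm 1 0)) (hterm 1 1)) (by ring))
    · exact hbound_int
    · apply Eventually.of_forall
      intro t ht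
      have htI := hIsub ht
      have hδc : ∀ i : Fin 2, ContinuousWithinAt (fun δ => u δ t i) (Icc (0:ℝ) 1) ε := by
        intro i
        exact ((huc i).comp ((continuous_id.prodMk continuous_const).continuousOn)
          (fun δ hδ => mk_mem_prod hδ htI)) ε hε
      have : ContinuousWithinAt (fun δ =>
          u ε t 0 * (φ₁ t 0 0 - φ₀ t 0 0) * u δ t 0
          + u ε t 0 * (φ₁ t 0 1 - φ₀ t 0 1) * u δ t 1
          + u ε t 1 * (φ₁ t 1 0 - φ₀ t 1 0) * u δ t 0
          + u ε t 1 * (φ₁ t 1 1 - φ₀ t 1 1) * u δ t 1) (Icc (0:ℝ) 1) ε :=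
        (((continuousWithinAt_const.mul (hδc 0)).add
          (continuousWithinAt_const.mul (hδc 1))).add
          (continuousWithinAt_const.mul (hδc 0))).add
          (continuousWithinAt_const.mul (hδc 1))
      exact this.congr (fun δ _ => expand δ t) (expand ε t)
  -- the punctured filter
  set s' : Set ℝ := Icc (0:ℝ) 1 \ {ε} with hs'
  have hne : (𝓝[s'] ε).NeBot := by
    rcases lt_or_eq_of_le hε.2 with h1 | h1
    · have hsub' : Ioo ε 1 ⊆ s' := fun y hy =>
        ⟨⟨hε.1.trans hy.1.le, hy.2.le⟩, by simp [hy.1.ne']⟩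
      have hcl : ε ∈ closure (Ioo ε 1) := by
        rw [closure_Ioo h1.ne]; exact left_mem_Icc.2 h1.le
      exact mem_closure_iff_nhdsWithin_neBot.mp (closure_mono hsub' hcl)
    · have hsub' : Ioo (0:ℝ) 1 ⊆ s' := fun y hy =>
        ⟨⟨hy.1.le, hy.2.le⟩, by simp [h1 ▸ hy.2.ne]⟩
      have hcl : ε ∈ closure (Ioo (0:ℝ) 1) := by
        rw [closure_Ioo (by norm_num : (0:ℝ) ≠ 1)]
        exact hε
      exact mem_closure_iff_nhdsWithin_neBot.mp (closure_mono hsub' hcl)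
  have hl1 : 𝓝[s'] ε ≤ 𝓝[{ε}ᶜ] ε := nhdsWithin_mono _ (fun y hy => hy.2)
  have hl2 : 𝓝[s'] ε ≤ 𝓝[Icc (0:ℝ) 1] ε := nhdsWithin_mono _ diff_subset
  have hslope : ∀ i : Fin 2, Tendsto (fun δ => (u δ x i - u ε x i) / (δ - ε))
      (𝓝[s'] ε) (𝓝 (uε ε x i)) := by
    intro i
    have h := (hasDerivAt_iff_tendsto_slope.mp (hder ε hε x hx i)).mono_left hl1
    apply h.congr
    intro δ
    rw [slope_def_field]
  have hTΦ1 : Tendsto Φ (𝓝[s'] ε) (𝓝 (Wr (u ε) (uε ε) x)) := by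
    have hT : Tendsto (fun δ => u ε x 0 * ((u δ x 1 - u ε x 1) / (δ - ε))
        - u ε x 1 * ((u δ x 0 - u ε x 0) / (δ - ε))) (𝓝[s'] ε)
        (𝓝 (u ε x 0 * uε ε x 1 - u ε x 1 * uε ε x 0)) :=
      ((hslope 1).const_mul _).sub ((hslope 0).const_mul _)
    have : Wr (u ε) (uε ε) x = u ε x 0 * uε ε x 1 - u ε x 1 * uε ε x 0 := rfl
    rw [this]
    apply hT.congr'
    filter_upwards [eventually_mem_nhdsWithin] with δ hδ
    have hδI : δ ∈ Icc (0:ℝ) 1 := hδ.1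
    have hδne : δ - ε ≠ 0 := sub_ne_zero.mpr (by simpa using hδ.2)
    have hG := hGreen δ hδI
    simp only [Wr] at hG
    field_simp
    linarith [hG]
  have hTΦ2 : Tendsto Φ (𝓝[s'] ε) (𝓝 (Φ ε)) := hΦcont.mono_left hl2
  have := tendsto_nhds_unique hTΦ1 hTΦ2
  rw [this, hΦ]

theorem wronskian_of_eps_derivative
    (a b : ℝ) (hab : a < b)
    (φ₀ φ₁ : ℝ → Matrix (Fin 2) (Fin 2) ℝ)
    (hs₀ : ∀ x ∈ Set.Icc a b, (φ₀ x).IsSymm) (hs₁ : ∀ x ∈ Set.Icc a b, (φ₁ x).IsSymm)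
    (hi₀ : ∀ i j : Fin 2, IntegrableOn (fun x => φ₀ x i j) (Set.Icc a b) volume)
    (hi₁ : ∀ i j : Fin 2, IntegrableOn (fun x => φ₁ x i j) (Set.Icc a b) volume)
    (α β : ℝ)
    (u uε : ℝ → ℝ → Fin 2 → ℝ)
    -- joint continuity of `u` and of its `ε`-derivative `uε`
    (huc : ∀ i : Fin 2, ContinuousOn (fun p : ℝ × ℝ => u p.1 p.2 i)
      (Set.Icc 0 1 ×ˢ Set.Icc a b))
    (huεc : ∀ i : Fin 2, ContinuousOn (fun p : ℝ × ℝ => uε p.1 p.2 i)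
      (Set.Icc 0 1 ×ˢ Set.Icc a b))
    (hder : ∀ ε ∈ Set.Icc (0:ℝ) 1, ∀ x ∈ Set.Icc a b, ∀ i : Fin 2,
      HasDerivAt (fun e => u e x i) (uε ε x i) ε)
    (hsol : ∀ ε ∈ Set.Icc (0:ℝ) 1,
      IsDiracSolution (Set.Icc a b) (fun x => φ₀ x + ε • (φ₁ x - φ₀ x)) 0 (u ε)) :
    -- boundary condition at `b`
    ((∀ ε ∈ Set.Icc (0:ℝ) 1, u ε b = ![Real.sin β, Real.cos β]) →
      ∀ ε ∈ Set.Icc (0:ℝ) 1, ∀ x ∈ Set.Icc a b,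
        Wr (u ε) (uε ε) x = ∫ r in x..b, ip (u ε r) ((φ₀ r - φ₁ r).mulVec (u ε r))) ∧
    -- boundary condition at `a`
    ((∀ ε ∈ Set.Icc (0:ℝ) 1, u ε a = ![Real.sin α, Real.cos α]) →
      ∀ ε ∈ Set.Icc (0:ℝ) 1, ∀ x ∈ Set.Icc a b,
        Wr (u ε) (uε ε) x = -∫ r in a..x, ip (u ε r) ((φ₀ r - φ₁ r).mulVec (u ε r))) := by
  have hpt : ∀ ε t, ip (u ε t) ((φ₁ t - φ₀ t).mulVec (u ε t)) =
      -(ip (u ε t) ((φ₀ t - φ₁ t).mulVec (u ε t))) := by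
    intro ε t
    simp only [ip, Matrix.mulVec, dotProduct, Fin.sum_univ_two, Matrix.sub_apply]
    ring
  constructor
  · intro hb ε hε x hx
    have hbc : ∀ δ ∈ Set.Icc (0:ℝ) 1, u δ b = u ε b := fun δ hδ => by
      rw [hb δ hδ, hb ε hε]
    have hk := key a b hab.le φ₀ φ₁ hs₀ hs₁ hi₀ hi₁ u uε huc hder hsol ε hε b
      (right_mem_Icc.2 hab.le) hbc x hx
    rw [hk]
    simp_rw [hpt ε]
    rw [intervalIntegral.integral_neg, ← intervalIntegral.integral_symm]
  · intro ha ε hε x hx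
    have hbc : ∀ δ ∈ Set.Icc (0:ℝ) 1, u δ a = u ε a := fun δ hδ => by
      rw [ha δ hδ, ha ε hε]
    have hk := key a b hab.le φ₀ φ₁ hs₀ hs₁ hi₀ hi₁ u uε huc hder hsol ε hε a
      (left_mem_Icc.2 hab.le) hbc x hx
    rw [hk]
    simp_rw [hpt ε]
    rw [intervalIntegral.integral_neg]
end

section
/- Let [a, b] be compact, φ₀, φ₁ integrable on [a, b] with φ₀(x) − φ₁(x) positive semidefinite for a.e. x, and for ε ∈ [0, 1] set φ_ε = φ₀ + ε·(φ₁ − φ₀). Fix β ∈ ℝ and let u : [0,1] × [a,b] → ℝ² be continuously differentiable such that each u_ε := u(ε, ·) is a nontrivial solution of τ_{φ_ε} u_ε = 0 with u_ε(b) = (sin β, cos β). Let θ : [0,1] × [a,b] → ℝ be continuous, differentiable in ε, such that θ(ε, ·) is a Prüfer angle of u_ε with θ(ε, b) = β for all ε. Then ∂_ε θ(ε, x) = −W_x(u_ε, ∂_ε u_ε)/ρ_ε(x)² ≤ 0 for all ε ∈ [0,1] and x ∈ [a,b]; moreover ∂_ε θ(ε, x) < 0 whenever φ₀ − φ₁ is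 positive definite on a subset of (x, b) of positive Lebesgue measure. Analogously, if instead u_ε(a) = (sin α, cos α) and θ(ε, a) = α for all ε, then ∂_ε θ(ε, x) ≥ 0, with strict inequality when φ₀ − φ₁ is positive definite on a subset of (a, x) of positive Lebesgue measure. -/
open MeasureTheory Real Set

lemma fubini_tri {c x : ℝ} (f' g' : ℝ → ℝ)
    (hf : IntegrableOn f' (Ioc c x)) (hg : IntegrableOn g' (Ioc c x)) :
    (∫ s in Ioc c x, f' s * ∫ t in Ioc c s, g' t)
      + (∫ t in Ioc c x, (∫ s in Ioc c t, f' s) * g' t)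
    = (∫ s in Ioc c x, f' s) * (∫ t in Ioc c x, g' t) := by
  set μ := volume.restrict (Ioc c x) with hμ
  set F : ℝ × ℝ → ℝ := fun p => f' p.1 * g' p.2 with hF
  have hfg : Integrable F (μ.prod μ) := hf.mul_prod hg
  have hm1 : MeasurableSet {p : ℝ × ℝ | p.2 ≤ p.1} :=
    (isClosed_le continuous_snd continuous_fst).measurableSet
  have hm2 : MeasurableSet {p : ℝ × ℝ | p.1 < p.2} :=
    (isOpen_lt continuous_fst continuous_snd).measurableSet
  have hsum : ({p : ℝ × ℝ | p.2 ≤ p.1}.indicator F) + ({p : ℝ × ℝ | p.1 < p.2}.indicator F)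
      = F := by
    funext p
    by_cases h : p.2 ≤ p.1
    · simp [Set.indicator_apply, h, not_lt.mpr h]
    · simp [Set.indicator_apply, h, lt_of_not_ge h]
  -- A
  have hA : ∫ p, ({p : ℝ × ℝ | p.2 ≤ p.1}.indicator F) p ∂(μ.prod μ)
      = ∫ s in Ioc c x, f' s * ∫ t in Ioc c s, g' t := by
    rw [MeasureTheory.integral_prod _ (hfg.indicator hm1)]
    refine setIntegral_congr_fun measurableSet_Ioc (fun s hs => ?_)
    have h1 : (fun t => ({p : ℝ × ℝ | p.2 ≤ p.1}.indicator F) (s, t))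
        = (Iic s).indicator (fun t => f' s * g' t) := by
      funext t
      by_cases h : t ≤ s <;> simp [Set.indicator_apply, h, hF]
    rw [h1, integral_indicator measurableSet_Iic, hμ,
      Measure.restrict_restrict measurableSet_Iic]
    have h2 : Iic s ∩ Ioc c x = Ioc c s := by
      ext t
      simp only [mem_inter_iff, mem_Iic, mem_Ioc]
      exact ⟨fun ⟨h1, h2, h3⟩ => ⟨h2, h1⟩, fun ⟨h1, h2⟩ => ⟨h2, h1, h2.trans hs.2⟩⟩
    rw [h2, integral_const_mul]
  -- B
  have hB : ∫ p, ({p : ℝ × ℝ | p.1 < p.2}.indicator F) p ∂(μ.prod μ)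
      = ∫ t in Ioc c x, (∫ s in Ioc c t, f' s) * g' t := by
    rw [MeasureTheory.integral_prod_symm _ (hfg.indicator hm2)]
    refine setIntegral_congr_fun measurableSet_Ioc (fun t ht => ?_)
    have h1 : (fun s => ({p : ℝ × ℝ | p.1 < p.2}.indicator F) (s, t))
        = (Iio t).indicator (fun s => f' s * g' t) := by
      funext s
      by_cases h : s < t <;> simp [Set.indicator_apply, h, hF]
    rw [h1, integral_indicator measurableSet_Iio, hμ,
      Measure.restrict_restrict measurableSet_Iio]
    have h2 : Iio t ∩ Ioc c x = Ioo c t := by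
      ext s
      simp only [mem_inter_iff, mem_Iio, mem_Ioo]
      exact ⟨fun ⟨h1, h2, h3⟩ => ⟨h2, h1⟩, fun ⟨h1, h2⟩ => ⟨h2, h1, le_of_lt (h2.trans_le ht.2)⟩⟩
    rw [h2, integral_mul_const, ← integral_Ioc_eq_integral_Ioo]
  calc (∫ s in Ioc c x, f' s * ∫ t in Ioc c s, g' t)
      + (∫ t in Ioc c x, (∫ s in Ioc c t, f' s) * g' t)
      = ∫ p, (({p : ℝ × ℝ | p.2 ≤ p.1}.indicator F) p
          + ({p : ℝ × ℝ | p.1 < p.2}.indicator F) p) ∂(μ.prod μ) := by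
        rw [integral_add (hfg.indicator hm1) (hfg.indicator hm2), hA, hB]
    _ = ∫ p, F p ∂(μ.prod μ) :=
        integral_congr_ae (Filter.Eventually.of_forall fun p => congrFun hsum p)
    _ = (∫ s in Ioc c x, f' s) * (∫ t in Ioc c x, g' t) := integral_prod_mul f' g'

lemma prod_rule_le {c x : ℝ} (hcx : c ≤ x) (f g f' g' : ℝ → ℝ)
    (hfI : IntervalIntegrable f' volume c x) (hgI : IntervalIntegrable g' volume c x)
    (hf : ∀ y ∈ Icc c x, f y = f c + ∫ t in c..y, f' t)
    (hg : ∀ y ∈ Icc c x, g y = g c + ∫ t in c..y, g' t)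
    (hfc : ContinuousOn f (Icc c x)) (hgc : ContinuousOn g (Icc c x)) :
    IntervalIntegrable (fun t => f' t * g t + f t * g' t) volume c x ∧
      f x * g x - f c * g c = ∫ t in c..x, (f' t * g t + f t * g' t) := by
  have huIcc : uIcc c x = Icc c x := uIcc_of_le hcx
  have hint : IntervalIntegrable (fun t => f' t * g t + f t * g' t) volume c x := by
    refine (hfI.mul_continuousOn ?_).add (hgI.continuousOn_mul ?_) <;> rw [huIcc]
    exacts [hgc, hfc]
  refine ⟨hint, ?_⟩
  set F : ℝ → ℝ := fun y => ∫ t in c..y, f' t with hF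
  set G : ℝ → ℝ := fun y => ∫ t in c..y, g' t with hG
  have hFeq : ∀ y ∈ Icc c x, F y = f y - f c := fun y hy => by rw [hf y hy]; ring
  have hGeq : ∀ y ∈ Icc c x, G y = g y - g c := fun y hy => by rw [hg y hy]; ring
  have hFc : ContinuousOn F (Icc c x) := fun y hy =>
    ((hfc.sub continuousOn_const).congr hFeq y hy)
  have hGc : ContinuousOn G (Icc c x) := fun y hy =>
    ((hgc.sub continuousOn_const).congr hGeq y hy)
  have step1 : ∫ t in c..x, (f' t * g t + f t * g' t)
      = ∫ t in c..x, (f' t * g c + f' t * G t + (f c * g' t + F t * g' t)) := by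
    refine intervalIntegral.integral_congr (fun t ht => ?_)
    rw [huIcc] at ht
    rw [hf t ht, hg t ht]; ring
  have i1 : IntervalIntegrable (fun t => f' t * g c) volume c x := hfI.mul_const _
  have i2 : IntervalIntegrable (fun t => f' t * G t) volume c x :=
    hfI.mul_continuousOn (by rw [huIcc]; exact hGc)
  have i3 : IntervalIntegrable (fun t => f c * g' t) volume c x := hgI.const_mul _
  have i4 : IntervalIntegrable (fun t => F t * g' t) volume c x :=
    hgI.continuousOn_mul (by rw [huIcc]; exact hFc)
  have step2 : ∫ t in c..x, (f' t * g c + f' t * G t + (f c * g' t + F t * g' t))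
      = (F x * g c + ∫ t in c..x, f' t * G t) + (f c * G x + ∫ t in c..x, F t * g' t) := by
    rw [intervalIntegral.integral_add (i1.add i2) (i3.add i4),
      intervalIntegral.integral_add i1 i2, intervalIntegral.integral_add i3 i4,
      intervalIntegral.integral_mul_const, intervalIntegral.integral_const_mul]
  have hIoc : ∀ h : ℝ → ℝ, IntervalIntegrable h volume c x →
      ∫ t in c..x, h t = ∫ t in Ioc c x, h t := fun h _ =>
    intervalIntegral.integral_of_le hcx
  have key : (∫ t in c..x, f' t * G t) + (∫ t in c..x, F t * g' t) = F x * G x := by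
    have e1 : ∫ t in c..x, f' t * G t = ∫ s in Ioc c x, f' s * ∫ t in Ioc c s, g' t := by
      rw [intervalIntegral.integral_of_le hcx]
      refine setIntegral_congr_fun measurableSet_Ioc (fun s hs => ?_)
      rw [hG]; simp only []
      rw [intervalIntegral.integral_of_le (le_of_lt hs.1)]
    have e2 : ∫ t in c..x, F t * g' t = ∫ t in Ioc c x, (∫ s in Ioc c t, f' s) * g' t := by
      rw [intervalIntegral.integral_of_le hcx]
      refine setIntegral_congr_fun measurableSet_Ioc (fun s hs => ?_)
      rw [hF]; simp only []
      rw [intervalIntegral.integral_of_le (le_of_lt hs.1)]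
    have e3 : F x = ∫ s in Ioc c x, f' s := intervalIntegral.integral_of_le hcx
    have e4 : G x = ∫ t in Ioc c x, g' t := intervalIntegral.integral_of_le hcx
    rw [e1, e2, e3, e4]
    exact fubini_tri f' g' ((intervalIntegrable_iff_integrableOn_Ioc_of_le hcx).mp hfI)
      ((intervalIntegrable_iff_integrableOn_Ioc_of_le hcx).mp hgI)
  have hfx := hf x ⟨hcx, le_refl x⟩
  have hgx := hg x ⟨hcx, le_refl x⟩
  rw [step1, step2]
  have : f x * g x = (f c + F x) * (g c + G x) := by rw [← hf x ⟨hcx, le_refl x⟩, ← hg x ⟨hcx, le_refl x⟩]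
  rw [this]
  nlinarith [key]

lemma prod_rule_gen {a b : ℝ} (f g f' g' : ℝ → ℝ)
    (hfc : ContinuousOn f (Icc a b)) (hgc : ContinuousOn g (Icc a b))
    (hfI : ∀ c ∈ Icc a b, ∀ x ∈ Icc a b,
      IntervalIntegrable f' volume c x ∧ f x = f c + ∫ t in c..x, f' t)
    (hgI : ∀ c ∈ Icc a b, ∀ x ∈ Icc a b,
      IntervalIntegrable g' volume c x ∧ g x = g c + ∫ t in c..x, g' t) :
    ∀ c ∈ Icc a b, ∀ x ∈ Icc a b,
      IntervalIntegrable (fun t => f' t * g t + f t * g' t) volume c x ∧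
      f x * g x - f c * g c = ∫ t in c..x, (f' t * g t + f t * g' t) := by
  intro c hc x hx
  rcases le_total c x with hcx | hxc
  · have hsub : Icc c x ⊆ Icc a b := Icc_subset_Icc hc.1 hx.2
    exact prod_rule_le hcx f g f' g' (hfI c hc x hx).1 (hgI c hc x hx).1
      (fun y hy => (hfI c hc y (hsub hy)).2) (fun y hy => (hgI c hc y (hsub hy)).2)
      (hfc.mono hsub) (hgc.mono hsub)
  · have hsub : Icc x c ⊆ Icc a b := Icc_subset_Icc hx.1 hc.2
    obtain ⟨hint, heq⟩ := prod_rule_le hxc f g f' g' (hfI x hx c hc).1 (hgI x hx c hc).1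
      (fun y hy => (hfI x hx y (hsub hy)).2) (fun y hy => (hgI x hx y (hsub hy)).2)
      (hfc.mono hsub) (hgc.mono hsub)
    refine ⟨hint.symm, ?_⟩
    rw [intervalIntegral.integral_symm, ← heq]; ring

lemma integrableOn_q {a b : ℝ} (φ : ℝ → Matrix (Fin 2) (Fin 2) ℝ)
    (hi : ∀ i j : Fin 2, IntegrableOn (fun x => φ x i j) (Set.Icc a b) volume)
    (w v : ℝ → Fin 2 → ℝ)
    (hw : ∀ i : Fin 2, ContinuousOn (fun t => w t i) (Set.Icc a b))
    (hv : ∀ i : Fin 2, ContinuousOn (fun t => v t i) (Set.Icc a b)) :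
    IntegrableOn (fun t => ip (w t) ((φ t).mulVec (v t))) (Set.Icc a b) volume := by
  have hK : IsCompact (Set.Icc a b) := isCompact_Icc
  have heq : ∀ t, ip (w t) ((φ t).mulVec (v t))
      = φ t 0 0 * (w t 0 * v t 0) + φ t 0 1 * (w t 0 * v t 1)
        + φ t 1 0 * (w t 1 * v t 0) + φ t 1 1 * (w t 1 * v t 1) := by
    intro t
    simp [ip, Matrix.mulVec, dotProduct, Fin.sum_univ_two]
    ring
  have hterm : ∀ i j : Fin 2, IntegrableOn (fun t => φ t i j * (w t i * v t j))
      (Set.Icc a b) volume := fun i j =>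
    (hi i j).mul_continuousOn ((hw i).mul (hv j)) hK
  have h4 := (((hterm 0 0).add (hterm 0 1)).add (hterm 1 0)).add (hterm 1 1)
  simp only [heq]
  exact h4

lemma wr_increment {a b : ℝ} (φ₀ φ₁ : ℝ → Matrix (Fin 2) (Fin 2) ℝ)
    (hs₀ : ∀ x ∈ Set.Icc a b, (φ₀ x).IsSymm) (hs₁ : ∀ x ∈ Set.Icc a b, (φ₁ x).IsSymm)
    (ε e : ℝ) (w v : ℝ → Fin 2 → ℝ)
    (hw : IsDiracSolution (Set.Icc a b) (fun x => φ₀ x + ε • (φ₁ x - φ₀ x)) 0 w)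
    (hv : IsDiracSolution (Set.Icc a b) (fun x => φ₀ x + e • (φ₁ x - φ₀ x)) 0 v) :
    ∀ c ∈ Set.Icc a b, ∀ x ∈ Set.Icc a b,
      Wr w v x - Wr w v c
        = (e - ε) * ∫ t in c..x, ip (w t) ((φ₁ t - φ₀ t).mulVec (v t)) := by
  obtain ⟨w', ⟨hwc, hwint⟩, hwode⟩ := hw
  obtain ⟨v', ⟨hvc, hvint⟩, hvode⟩ := hv
  intro c hc x hx
  have hwci : ∀ i : Fin 2, ContinuousOn (fun t => w t i) (Set.Icc a b) :=
    fun i => (continuous_apply i).comp_continuousOn hwc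
  have hvci : ∀ i : Fin 2, ContinuousOn (fun t => v t i) (Set.Icc a b) :=
    fun i => (continuous_apply i).comp_continuousOn hvc
  obtain ⟨hint1, heq1⟩ := prod_rule_gen (fun t => w t 0) (fun t => v t 1)
    (fun t => w' t 0) (fun t => v' t 1) (hwci 0) (hvci 1)
    (fun c hc x hx => ⟨(hwint c hc x hx 0).1, (hwint c hc x hx 0).2⟩)
    (fun c hc x hx => ⟨(hvint c hc x hx 1).1, (hvint c hc x hx 1).2⟩) c hc x hx
  obtain ⟨hint2, heq2⟩ := prod_rule_gen (fun t => w t 1) (fun t => v t 0)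
    (fun t => w' t 1) (fun t => v' t 0) (hwci 1) (hvci 0)
    (fun c hc x hx => ⟨(hwint c hc x hx 1).1, (hwint c hc x hx 1).2⟩)
    (fun c hc x hx => ⟨(hvint c hc x hx 0).1, (hvint c hc x hx 0).2⟩) c hc x hx
  have hWr : Wr w v x - Wr w v c
      = ∫ t in c..x, ((w' t 0 * v t 1 + w t 0 * v' t 1)
          - (w' t 1 * v t 0 + w t 1 * v' t 0)) := by
    rw [intervalIntegral.integral_sub hint1 hint2, ← heq1, ← heq2]
    simp only [Wr]; ring
  rw [hWr, ← intervalIntegral.integral_const_mul]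
  refine intervalIntegral.integral_congr_ae ?_
  have huIoc : Set.uIoc c x ⊆ Set.Icc a b := by
    exact Set.uIoc_subset_uIcc.trans (Set.uIcc_subset_Icc hc hx)
  filter_upwards [hwode, hvode] with t h1 h2 ht
  have htI : t ∈ Set.Icc a b := huIoc ht
  have hwE := h1 htI
  have hvE := h2 htI
  have hw0 := congrFun hwE 0
  have hw1 := congrFun hwE 1
  have hv0 := congrFun hvE 0
  have hv1 := congrFun hvE 1
  have hsym0 := Matrix.IsSymm.apply (hs₀ t htI) 0 1
  have hsym1 := Matrix.IsSymm.apply (hs₁ t htI) 0 1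
  simp only [Jmat, Matrix.mulVec, dotProduct, Fin.sum_univ_two, Pi.add_apply,
    Matrix.of_apply, Matrix.cons_val', Matrix.cons_val_zero, Matrix.cons_val_one,
    Matrix.head_cons, Matrix.head_fin_const, Matrix.add_apply, Matrix.smul_apply,
    Matrix.sub_apply, smul_eq_mul, Pi.smul_apply, zero_smul, Pi.zero_apply,
    Matrix.empty_val', Matrix.cons_val_fin_one, zero_mul, one_mul, neg_mul, neg_one_mul,
    zero_add, add_zero] at hw0 hw1 hv0 hv1
  simp only [ip, Matrix.mulVec, dotProduct, Fin.sum_univ_two, Matrix.sub_apply]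
  linear_combination v t 1 * hw1 + v t 0 * hw0 - w t 0 * hv0 - w t 1 * hv1
    + ((1-ε)*(w t 1 * v t 0 - w t 0 * v t 1)) * hsym0
    + (ε*(w t 1 * v t 0 - w t 0 * v t 1)) * hsym1

lemma wr_deriv (a b : ℝ) (hab : a < b)
    (φ₀ φ₁ : ℝ → Matrix (Fin 2) (Fin 2) ℝ)
    (hs₀ : ∀ x ∈ Set.Icc a b, (φ₀ x).IsSymm) (hs₁ : ∀ x ∈ Set.Icc a b, (φ₁ x).IsSymm)
    (hi₀ : ∀ i j : Fin 2, IntegrableOn (fun x => φ₀ x i j) (Set.Icc a b) volume)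
    (hi₁ : ∀ i j : Fin 2, IntegrableOn (fun x => φ₁ x i j) (Set.Icc a b) volume)
    (u uε : ℝ → ℝ → Fin 2 → ℝ)
    (huc : ∀ i : Fin 2, ContinuousOn (fun p : ℝ × ℝ => u p.1 p.2 i)
      (Set.Icc 0 1 ×ˢ Set.Icc a b))
    (hder : ∀ ε ∈ Set.Icc (0:ℝ) 1, ∀ x ∈ Set.Icc a b, ∀ i : Fin 2,
      HasDerivAt (fun e => u e x i) (uε ε x i) ε)
    (hsol : ∀ ε ∈ Set.Icc (0:ℝ) 1,
      IsDiracSolution (Set.Icc a b) (fun x => φ₀ x + ε • (φ₁ x - φ₀ x)) 0 (u ε))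
    (ε : ℝ) (hε : ε ∈ Set.Icc (0:ℝ) 1) (c : ℝ) (hc : c ∈ Set.Icc a b)
    (x : ℝ) (hx : x ∈ Set.Icc a b) :
    Wr (u ε) (uε ε) x - Wr (u ε) (uε ε) c
      = ∫ t in c..x, ip (u ε t) ((φ₁ t - φ₀ t).mulVec (u ε t)) := by
  -- the uniform bound on `u`
  obtain ⟨C, hC⟩ : ∃ C : ℝ, ∀ e ∈ Set.Icc (0:ℝ) 1, ∀ t ∈ Set.Icc a b, ∀ i : Fin 2,
      |u e t i| ≤ C := by
    obtain ⟨C0, hC0⟩ := (isCompact_Icc.prod isCompact_Icc).exists_bound_of_continuousOn (huc 0)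
    obtain ⟨C1, hC1⟩ := (isCompact_Icc.prod isCompact_Icc).exists_bound_of_continuousOn (huc 1)
    refine ⟨max C0 C1, fun e he t ht i => ?_⟩
    fin_cases i
    · exact (hC0 (e, t) ⟨he, ht⟩).trans (le_max_left _ _)
    · exact (hC1 (e, t) ⟨he, ht⟩).trans (le_max_right _ _)
  have hC0 : 0 ≤ C := le_trans (abs_nonneg _) (hC 0 (by norm_num) a ⟨le_refl a, le_of_lt hab⟩ 0)
  have huIoc : Set.uIoc c x ⊆ Set.Icc a b :=
    Set.uIoc_subset_uIcc.trans (Set.uIcc_subset_Icc hc hx)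
  set M : ℝ → Matrix (Fin 2) (Fin 2) ℝ := fun t => φ₁ t - φ₀ t with hM
  have hMint : ∀ i j : Fin 2, IntegrableOn (fun t => M t i j) (Set.Icc a b) volume := by
    intro i j
    have : (fun t => M t i j) = fun t => φ₁ t i j - φ₀ t i j := by
      funext t; simp [hM, Matrix.sub_apply]
    rw [this]
    exact (hi₁ i j).sub (hi₀ i j)
  set H : ℝ → ℝ := fun e => ∫ t in c..x, ip (u ε t) ((M t).mulVec (u e t)) with hH
  -- L e = (e - ε) * H e on Icc 0 1
  set L : ℝ → ℝ := fun e => Wr (u ε) (u e) x - Wr (u ε) (u e) c with hL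
  have hLH : ∀ e ∈ Set.Icc (0:ℝ) 1, L e = (e - ε) * H e := fun e he =>
    wr_increment φ₀ φ₁ hs₀ hs₁ ε e (u ε) (u e) (hsol ε hε) (hsol e he) c hc x hx
  -- continuity of H within Icc 0 1 at ε
  have hHcont : ContinuousWithinAt H (Set.Icc 0 1) ε := by
    rw [hH]
    refine intervalIntegral.continuousWithinAt_of_dominated_interval
      (bound := fun t => C * C * (|M t 0 0| + |M t 0 1| + |M t 1 0| + |M t 1 1|))
      ?_ ?_ ?_ ?_
    · filter_upwards [self_mem_nhdsWithin] with e (he : e ∈ Set.Icc (0:ℝ) 1)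
      have hexp : ∀ t, ip (u ε t) ((M t).mulVec (u e t))
          = M t 0 0 * (u ε t 0 * u e t 0) + M t 0 1 * (u ε t 0 * u e t 1)
            + M t 1 0 * (u ε t 1 * u e t 0) + M t 1 1 * (u ε t 1 * u e t 1) := by
        intro t
        simp [ip, Matrix.mulVec, dotProduct, Fin.sum_univ_two]; ring
      have hslice : ∀ i : Fin 2, ∀ e' ∈ Set.Icc (0:ℝ) 1,
          ContinuousOn (fun t => u e' t i) (Set.Icc a b) := by
        intro i e' he'
        exact (huc i).comp
          (Continuous.continuousOn (f := fun t : ℝ => (e', t))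
            (continuous_const.prodMk continuous_id))
          (fun t ht => Set.mk_mem_prod he' ht)
      have hterm : ∀ i j : Fin 2, AEStronglyMeasurable
          (fun t => M t i j * (u ε t i * u e t j)) (volume.restrict (Set.uIoc c x)) := by
        intro i j
        have h1 : AEStronglyMeasurable (fun t => M t i j)
            (volume.restrict (Set.uIoc c x)) :=
          ((hMint i j).mono_set huIoc).aestronglyMeasurable
        have h2 : AEStronglyMeasurable (fun t => u ε t i * u e t j)
            (volume.restrict (Set.uIoc c x)) := by
          have h2' : AEStronglyMeasurable (fun t => u ε t i * u e t j)
              (volume.restrict (Set.Icc a b)) :=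
            ((hslice i ε hε).mul (hslice j e he)).aestronglyMeasurable measurableSet_Icc
          exact h2'.mono_measure (Measure.restrict_mono huIoc (le_refl _))
        exact h1.mul h2
      have : (fun t => ip (u ε t) ((M t).mulVec (u e t)))
          = fun t => M t 0 0 * (u ε t 0 * u e t 0) + M t 0 1 * (u ε t 0 * u e t 1)
            + M t 1 0 * (u ε t 1 * u e t 0) + M t 1 1 * (u ε t 1 * u e t 1) := funext hexp
      rw [this]
      exact (((hterm 0 0).add (hterm 0 1)).add (hterm 1 0)).add (hterm 1 1)
    · filter_upwards [self_mem_nhdsWithin] with e (he : e ∈ Set.Icc (0:ℝ) 1)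
      refine Filter.Eventually.of_forall (fun t ht => ?_)
      have htI := huIoc ht
      have hb : ∀ i j : Fin 2, |M t i j * (u ε t i * u e t j)| ≤ C * C * |M t i j| := by
        intro i j
        rw [abs_mul, abs_mul]
        have h1 := hC ε hε t htI i
        have h2 := hC e he t htI j
        have h3 : |u ε t i| * |u e t j| ≤ C * C := mul_le_mul h1 h2 (abs_nonneg _) hC0
        nlinarith [h3, abs_nonneg (M t i j)]
      have hexp : ip (u ε t) ((M t).mulVec (u e t))
          = M t 0 0 * (u ε t 0 * u e t 0) + M t 0 1 * (u ε t 0 * u e t 1)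
            + M t 1 0 * (u ε t 1 * u e t 0) + M t 1 1 * (u ε t 1 * u e t 1) := by
        simp [ip, Matrix.mulVec, dotProduct, Fin.sum_univ_two]; ring
      rw [Real.norm_eq_abs, hexp]
      calc |M t 0 0 * (u ε t 0 * u e t 0) + M t 0 1 * (u ε t 0 * u e t 1)
            + M t 1 0 * (u ε t 1 * u e t 0) + M t 1 1 * (u ε t 1 * u e t 1)|
          ≤ |M t 0 0 * (u ε t 0 * u e t 0) + M t 0 1 * (u ε t 0 * u e t 1)
            + M t 1 0 * (u ε t 1 * u e t 0)| + |M t 1 1 * (u ε t 1 * u e t 1)| :=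
            abs_add_le _ _
        _ ≤ |M t 0 0 * (u ε t 0 * u e t 0) + M t 0 1 * (u ε t 0 * u e t 1)|
            + |M t 1 0 * (u ε t 1 * u e t 0)| + |M t 1 1 * (u ε t 1 * u e t 1)| := by
            have := abs_add_le (M t 0 0 * (u ε t 0 * u e t 0) + M t 0 1 * (u ε t 0 * u e t 1))
              (M t 1 0 * (u ε t 1 * u e t 0))
            linarith
        _ ≤ |M t 0 0 * (u ε t 0 * u e t 0)| + |M t 0 1 * (u ε t 0 * u e t 1)|
            + |M t 1 0 * (u ε t 1 * u e t 0)| + |M t 1 1 * (u ε t 1 * u e t 1)| := by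
            have := abs_add_le (M t 0 0 * (u ε t 0 * u e t 0)) (M t 0 1 * (u ε t 0 * u e t 1))
            linarith
        _ ≤ C * C * (|M t 0 0| + |M t 0 1| + |M t 1 0| + |M t 1 1|) := by
            have := hb 0 0; have := hb 0 1; have := hb 1 0; have := hb 1 1
            linarith
    · -- integrability of the bound
      have : ∀ i j : Fin 2, IntegrableOn (fun t => |M t i j|) (Set.uIoc c x) volume :=
        fun i j => ((hMint i j).mono_set huIoc).abs
      have hsum : IntegrableOn
          (fun t => C * C * (|M t 0 0| + |M t 0 1| + |M t 1 0| + |M t 1 1|))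
          (Set.uIoc c x) volume :=
        ((((this 0 0).add (this 0 1)).add (this 1 0)).add (this 1 1)).const_mul (C * C)
      exact (intervalIntegrable_iff).mpr hsum
    · refine Filter.Eventually.of_forall (fun t ht => ?_)
      have htI := huIoc ht
      have hcw : ∀ j : Fin 2, ContinuousWithinAt (fun e => u e t j) (Set.Icc 0 1) ε := by
        intro j
        have : ContinuousWithinAt (fun p : ℝ × ℝ => u p.1 p.2 j)
            (Set.Icc 0 1 ×ˢ Set.Icc a b) (ε, t) := (huc j) (ε, t) ⟨hε, htI⟩
        exact ContinuousWithinAt.comp (x := ε) (f := fun e : ℝ => (e, t))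
          (g := fun p : ℝ × ℝ => u p.1 p.2 j) this
          (Continuous.continuousWithinAt (continuous_id.prodMk continuous_const))
          (fun e he => Set.mk_mem_prod he htI)
      have : ContinuousWithinAt
          (fun e => M t 0 0 * (u ε t 0 * u e t 0) + M t 0 1 * (u ε t 0 * u e t 1)
            + M t 1 0 * (u ε t 1 * u e t 0) + M t 1 1 * (u ε t 1 * u e t 1))
          (Set.Icc 0 1) ε := by
        refine ContinuousWithinAt.add (ContinuousWithinAt.add (ContinuousWithinAt.add ?_ ?_) ?_) ?_
        all_goals exact (continuousWithinAt_const.mul (continuousWithinAt_const.mul (hcw _)))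
      refine this.congr (fun e _ => ?_) ?_
      all_goals simp [ip, Matrix.mulVec, dotProduct, Fin.sum_univ_two]; ring
  -- derivative of L at ε (within Icc 0 1)
  have hLder : HasDerivAt L (Wr (u ε) (uε ε) x - Wr (u ε) (uε ε) c) ε := by
    rw [hL]
    have hx0 := hder ε hε x hx 0
    have hx1 := hder ε hε x hx 1
    have hc0 := hder ε hε c hc 0
    have hc1 := hder ε hε c hc 1
    have h1 : HasDerivAt (fun e => u ε x 0 * u e x 1 - u ε x 1 * u e x 0)
        (u ε x 0 * uε ε x 1 - u ε x 1 * uε ε x 0) ε :=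
      ((hx1.const_mul _).sub (hx0.const_mul _))
    have h2 : HasDerivAt (fun e => u ε c 0 * u e c 1 - u ε c 1 * u e c 0)
        (u ε c 0 * uε ε c 1 - u ε c 1 * uε ε c 0) ε :=
      ((hc1.const_mul _).sub (hc0.const_mul _))
    exact (h1.sub h2)
  -- derivative of L within Icc 0 1 equals H ε via the slope
  have hLder2 : HasDerivWithinAt L (H ε) (Set.Icc 0 1) ε := by
    rw [hasDerivWithinAt_iff_tendsto_slope]
    have hslope : ∀ e ∈ Set.Icc (0:ℝ) 1 \ {ε}, slope L ε e = H e := by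
      intro e he
      have hLε : L ε = 0 := by rw [hLH ε hε]; ring
      have hne : e - ε ≠ 0 := sub_ne_zero.mpr (fun h => he.2 (by simp [h]))
      rw [slope_def_field, hLε, hLH e he.1, sub_zero, mul_comm, mul_div_assoc,
        div_self hne, mul_one]
    have htend : Filter.Tendsto H (nhdsWithin ε (Set.Icc 0 1 \ {ε})) (nhds (H ε)) :=
      (hHcont.mono Set.diff_subset).tendsto
    refine htend.congr' ?_
    filter_upwards [self_mem_nhdsWithin] with e he
    exact (hslope e he).symm
  have huniq : UniqueDiffWithinAt ℝ (Set.Icc (0:ℝ) 1) ε :=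
    (uniqueDiffOn_Icc (by norm_num)) ε hε
  exact huniq.eq_deriv _ (hLder.hasDerivWithinAt) hLder2

lemma step1 {a b : ℝ} (u uε : ℝ → ℝ → Fin 2 → ℝ) (θ θε : ℝ → ℝ → ℝ)
    (hder : ∀ ε ∈ Set.Icc (0:ℝ) 1, ∀ x ∈ Set.Icc a b, ∀ i : Fin 2,
      HasDerivAt (fun e => u e x i) (uε ε x i) ε)
    (hθp : ∀ ε ∈ Set.Icc (0:ℝ) 1, IsPruefer (Set.Icc a b) (u ε) (θ ε))
    (hθder : ∀ ε ∈ Set.Icc (0:ℝ) 1, ∀ x ∈ Set.Icc a b,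
      HasDerivAt (fun e => θ e x) (θε ε x) ε)
    (ε : ℝ) (hε : ε ∈ Set.Icc (0:ℝ) 1) (x : ℝ) (hx : x ∈ Set.Icc a b) :
    0 < ip (u ε x) (u ε x) ∧
      θε ε x * ip (u ε x) (u ε x) = -Wr (u ε) (uε ε) x := by
  obtain ⟨ρ, hρ, h0, h1⟩ := (hθp ε hε).2 x hx
  have hsc := Real.sin_sq_add_cos_sq (θ ε x)
  constructor
  · simp only [ip, h0, h1]
    have : ρ * Real.sin (θ ε x) * (ρ * Real.sin (θ ε x))
        + ρ * Real.cos (θ ε x) * (ρ * Real.cos (θ ε x))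
        = ρ^2 * (Real.sin (θ ε x)^2 + Real.cos (θ ε x)^2) := by ring
    rw [this, hsc, mul_one]
    positivity
  set g : ℝ → ℝ := fun e => u e x 0 * Real.cos (θ e x) - u e x 1 * Real.sin (θ e x) with hg
  have hg0 : ∀ e ∈ Set.Icc (0:ℝ) 1, g e = 0 := by
    intro e he
    obtain ⟨ρ', hρ', h0', h1'⟩ := (hθp e he).2 x hx
    simp only [hg, h0', h1']; ring
  have hcos : HasDerivAt (fun e => Real.cos (θ e x)) (-Real.sin (θ ε x) * θε ε x) ε :=
    by have := (Real.hasDerivAt_cos (θ ε x)).comp ε (hθder ε hε x hx); exact this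
  have hsin : HasDerivAt (fun e => Real.sin (θ e x)) (Real.cos (θ ε x) * θε ε x) ε :=
    by have := (Real.hasDerivAt_sin (θ ε x)).comp ε (hθder ε hε x hx); exact this
  have hgder : HasDerivAt g
      (uε ε x 0 * Real.cos (θ ε x) + u ε x 0 * (-Real.sin (θ ε x) * θε ε x)
        - (uε ε x 1 * Real.sin (θ ε x) + u ε x 1 * (Real.cos (θ ε x) * θε ε x))) ε :=
    ((hder ε hε x hx 0).mul hcos).sub ((hder ε hε x hx 1).mul hsin)
  have hzero : HasDerivWithinAt g 0 (Set.Icc 0 1) ε := by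
    refine (hasDerivWithinAt_const ε (Set.Icc 0 1) (0:ℝ)).congr (fun e he => hg0 e he) (hg0 ε hε)
  have hD : uε ε x 0 * Real.cos (θ ε x) + u ε x 0 * (-Real.sin (θ ε x) * θε ε x)
      - (uε ε x 1 * Real.sin (θ ε x) + u ε x 1 * (Real.cos (θ ε x) * θε ε x)) = 0 :=
    ((uniqueDiffOn_Icc (by norm_num : (0:ℝ) < 1)) ε hε).eq_deriv _
      hgder.hasDerivWithinAt hzero
  simp only [ip, Wr, h0, h1] at hD ⊢
  linear_combination (-ρ) * hD

theorem pruefer_angle_monotone_in_eps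
    (a b : ℝ) (hab : a < b)
    (φ₀ φ₁ : ℝ → Matrix (Fin 2) (Fin 2) ℝ)
    (hs₀ : ∀ x ∈ Set.Icc a b, (φ₀ x).IsSymm) (hs₁ : ∀ x ∈ Set.Icc a b, (φ₁ x).IsSymm)
    (hi₀ : ∀ i j : Fin 2, IntegrableOn (fun x => φ₀ x i j) (Set.Icc a b) volume)
    (hi₁ : ∀ i j : Fin 2, IntegrableOn (fun x => φ₁ x i j) (Set.Icc a b) volume)
    (hpos : ∀ᵐ x ∂volume, x ∈ Set.Icc a b → (φ₀ x - φ₁ x).PosSemidef)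
    (α β : ℝ)
    (u uε : ℝ → ℝ → Fin 2 → ℝ)
    (huc : ∀ i : Fin 2, ContinuousOn (fun p : ℝ × ℝ => u p.1 p.2 i)
      (Set.Icc 0 1 ×ˢ Set.Icc a b))
    (huεc : ∀ i : Fin 2, ContinuousOn (fun p : ℝ × ℝ => uε p.1 p.2 i)
      (Set.Icc 0 1 ×ˢ Set.Icc a b))
    (hder : ∀ ε ∈ Set.Icc (0:ℝ) 1, ∀ x ∈ Set.Icc a b, ∀ i : Fin 2,
      HasDerivAt (fun e => u e x i) (uε ε x i) ε)
    (hsol : ∀ ε ∈ Set.Icc (0:ℝ) 1,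
      IsDiracSolution (Set.Icc a b) (fun x => φ₀ x + ε • (φ₁ x - φ₀ x)) 0 (u ε))
    (hnt : ∀ ε ∈ Set.Icc (0:ℝ) 1, ∀ x ∈ Set.Icc a b, u ε x ≠ 0)
    (θ θε : ℝ → ℝ → ℝ)
    (hθc : ContinuousOn (fun p : ℝ × ℝ => θ p.1 p.2) (Set.Icc 0 1 ×ˢ Set.Icc a b))
    (hθp : ∀ ε ∈ Set.Icc (0:ℝ) 1, IsPruefer (Set.Icc a b) (u ε) (θ ε))
    (hθder : ∀ ε ∈ Set.Icc (0:ℝ) 1, ∀ x ∈ Set.Icc a b,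
      HasDerivAt (fun e => θ e x) (θε ε x) ε) :
    -- normalization at `b`
    ((∀ ε ∈ Set.Icc (0:ℝ) 1, u ε b = ![Real.sin β, Real.cos β] ∧ θ ε b = β) →
      ∀ ε ∈ Set.Icc (0:ℝ) 1, ∀ x ∈ Set.Icc a b,
        θε ε x = -Wr (u ε) (uε ε) x / ip (u ε x) (u ε x) ∧
        θε ε x ≤ 0 ∧
        (0 < volume {r | r ∈ Set.Ioo x b ∧ (φ₀ r - φ₁ r).PosDef} → θε ε x < 0)) ∧
    -- normalization at `a`
    ((∀ ε ∈ Set.Icc (0:ℝ) 1, u ε a = ![Real.sin α, Real.cos α] ∧ θ ε a = α) →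
      ∀ ε ∈ Set.Icc (0:ℝ) 1, ∀ x ∈ Set.Icc a b,
        θε ε x = -Wr (u ε) (uε ε) x / ip (u ε x) (u ε x) ∧
        0 ≤ θε ε x ∧
        (0 < volume {r | r ∈ Set.Ioo a x ∧ (φ₀ r - φ₁ r).PosDef} → 0 < θε ε x)) := by
  have h01 : (0:ℝ) ∈ Set.Icc (0:ℝ) 1 := ⟨le_refl 0, by norm_num⟩
  set Q : ℝ → ℝ → ℝ := fun ε t => ip (u ε t) ((φ₀ t - φ₁ t).mulVec (u ε t)) with hQ
  have hwci : ∀ ε ∈ Set.Icc (0:ℝ) 1, ∀ i : Fin 2,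
      ContinuousOn (fun t => u ε t i) (Set.Icc a b) := by
    intro ε hε i
    exact (huc i).comp
      (Continuous.continuousOn (f := fun t : ℝ => (ε, t))
        (continuous_const.prodMk continuous_id))
      (fun t ht => Set.mk_mem_prod hε ht)
  have hQint : ∀ ε ∈ Set.Icc (0:ℝ) 1, IntegrableOn (Q ε) (Set.Icc a b) volume := by
    intro ε hε
    refine integrableOn_q (fun t => φ₀ t - φ₁ t) (fun i j => ?_) (u ε) (u ε)
      (hwci ε hε) (hwci ε hε)
    have : (fun x => (φ₀ x - φ₁ x) i j) = fun x => φ₀ x i j - φ₁ x i j := by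
      funext t; simp [Matrix.sub_apply]
    rw [this]
    exact (hi₀ i j).sub (hi₁ i j)
  -- main identity
  have main : ∀ c ∈ Set.Icc a b, (∀ e ∈ Set.Icc (0:ℝ) 1, ∀ i : Fin 2, u e c i = u 0 c i) →
      ∀ ε ∈ Set.Icc (0:ℝ) 1, ∀ x ∈ Set.Icc a b,
        θε ε x = -Wr (u ε) (uε ε) x / ip (u ε x) (u ε x) ∧
        0 < ip (u ε x) (u ε x) ∧
        Wr (u ε) (uε ε) x = ∫ t in x..c, Q ε t := by
    intro c hc hcon ε hε x hx
    obtain ⟨hip, hidq⟩ := step1 u uε θ θε hder hθp hθder ε hε x hx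
    refine ⟨by rw [eq_div_iff (ne_of_gt hip)]; exact hidq, hip, ?_⟩
    have hz : ∀ i : Fin 2, uε ε c i = 0 := by
      intro i
      have hcd : HasDerivWithinAt (fun e => u e c i) 0 (Set.Icc 0 1) ε :=
        (hasDerivWithinAt_const ε _ (u 0 c i)).congr (fun e he => hcon e he i) (hcon ε hε i)
      exact ((uniqueDiffOn_Icc (by norm_num : (0:ℝ) < 1)) ε hε).eq_deriv _
        (hder ε hε c hc i).hasDerivWithinAt hcd
    have hWc : Wr (u ε) (uε ε) c = 0 := by simp [Wr, hz 0, hz 1]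
    have hkey := wr_deriv a b hab φ₀ φ₁ hs₀ hs₁ hi₀ hi₁ u uε huc hder hsol ε hε c hc x hx
    rw [hWc, sub_zero] at hkey
    rw [hkey, intervalIntegral.integral_symm x c, ← intervalIntegral.integral_neg]
    refine intervalIntegral.integral_congr (fun t _ => ?_)
    simp only [hQ, ip, Matrix.mulVec, dotProduct, Fin.sum_univ_two, Matrix.sub_apply]
    ring
  -- a.e. nonnegativity of Q on Icc a b
  have hQae : ∀ ε ∈ Set.Icc (0:ℝ) 1, ∀ᵐ t ∂volume, t ∈ Set.Icc a b → 0 ≤ Q ε t := by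
    intro ε hε
    filter_upwards [hpos] with t hp ht
    have := (hp ht).dotProduct_mulVec_nonneg (u ε t)
    simpa [hQ, ip, dotProduct, Fin.sum_univ_two] using this
  -- strict positivity of Q at points where the difference is positive definite
  have hQstrict : ∀ ε ∈ Set.Icc (0:ℝ) 1, ∀ r ∈ Set.Icc a b,
      (φ₀ r - φ₁ r).PosDef → 0 < Q ε r := by
    intro ε hε r hr hd
    have := hd.dotProduct_mulVec_pos (hnt ε hε r hr)
    simpa [hQ, ip, dotProduct, Fin.sum_univ_two] using this
  constructor
  · -- normalization at b
    intro hb ε hε x hx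
    have hcon : ∀ e ∈ Set.Icc (0:ℝ) 1, ∀ i : Fin 2, u e b i = u 0 b i := by
      intro e he i; rw [(hb e he).1, (hb 0 h01).1]
    obtain ⟨hth, hip, hW⟩ := main b ⟨hab.le, le_refl b⟩ hcon ε hε x hx
    have hxb : x ≤ b := hx.2
    have hsub : Set.Ioc x b ⊆ Set.Icc a b := fun t ht => ⟨hx.1.trans ht.1.le, ht.2⟩
    have hWset : Wr (u ε) (uε ε) x = ∫ t in Set.Ioc x b, Q ε t := by
      rw [hW, intervalIntegral.integral_of_le hxb]
    have hqae : ∀ᵐ t ∂volume, t ∈ Set.Ioc x b → 0 ≤ Q ε t := by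
      filter_upwards [hQae ε hε] with t h ht; exact h (hsub ht)
    have hW0 : 0 ≤ Wr (u ε) (uε ε) x := by
      rw [hWset]; exact setIntegral_nonneg_ae measurableSet_Ioc hqae
    have hle : θε ε x ≤ 0 := by
      rw [hth, neg_div]
      exact neg_nonpos.mpr (div_nonneg hW0 hip.le)
    refine ⟨hth, hle, ?_⟩
    intro hvol
    have hWpos : 0 < Wr (u ε) (uε ε) x := by
      rcases hW0.lt_or_eq with h | h
      · exact h
      · exfalso
        have hint : IntegrableOn (Q ε) (Set.Ioc x b) volume := (hQint ε hε).mono_set hsub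
        have hzero : ∫ t in Set.Ioc x b, Q ε t = 0 := by rw [← hWset, ← h]
        have hae0 : (Q ε) =ᵐ[volume.restrict (Set.Ioc x b)] 0 :=
          (integral_eq_zero_iff_of_nonneg_ae
            ((ae_restrict_iff' measurableSet_Ioc).mpr hqae) hint).mp hzero
        have hae0' : ∀ᵐ t ∂volume, t ∈ Set.Ioc x b → Q ε t = 0 :=
          (ae_restrict_iff' measurableSet_Ioc).mp hae0
        rw [Filter.eventually_iff, mem_ae_iff] at hae0'
        have hsubS : {r | r ∈ Set.Ioo x b ∧ (φ₀ r - φ₁ r).PosDef}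
            ⊆ {t | t ∈ Set.Ioc x b → Q ε t = 0}ᶜ := by
          intro r hr
          simp only [Set.mem_compl_iff, Set.mem_setOf_eq, not_forall]
          refine ⟨⟨hr.1.1, hr.1.2.le⟩, ?_⟩
          exact ne_of_gt (hQstrict ε hε r ⟨hx.1.trans hr.1.1.le, hr.1.2.le⟩ hr.2)
        have := measure_mono_null hsubS hae0'
        rw [this] at hvol
        exact lt_irrefl 0 hvol
    rw [hth, neg_div]
    exact neg_neg_of_pos (div_pos hWpos hip)
  · -- normalization at a
    intro ha ε hε x hx
    have hcon : ∀ e ∈ Set.Icc (0:ℝ) 1, ∀ i : Fin 2, u e a i = u 0 a i := by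
      intro e he i; rw [(ha e he).1, (ha 0 h01).1]
    obtain ⟨hth, hip, hW⟩ := main a ⟨le_refl a, hab.le⟩ hcon ε hε x hx
    have hax : a ≤ x := hx.1
    have hsub : Set.Ioc a x ⊆ Set.Icc a b := fun t ht => ⟨ht.1.le, ht.2.trans hx.2⟩
    have hWset : Wr (u ε) (uε ε) x = -∫ t in Set.Ioc a x, Q ε t := by
      rw [hW, intervalIntegral.integral_symm, intervalIntegral.integral_of_le hax]
    have hqae : ∀ᵐ t ∂volume, t ∈ Set.Ioc a x → 0 ≤ Q ε t := by
      filter_upwards [hQae ε hε] with t h ht; exact h (hsub ht)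
    have hI0 : 0 ≤ ∫ t in Set.Ioc a x, Q ε t := setIntegral_nonneg_ae measurableSet_Ioc hqae
    have hW0 : Wr (u ε) (uε ε) x ≤ 0 := by rw [hWset]; linarith
    have hle : 0 ≤ θε ε x := by
      rw [hth, neg_div]
      have : Wr (u ε) (uε ε) x / ip (u ε x) (u ε x) ≤ 0 :=
        div_nonpos_of_nonpos_of_nonneg hW0 hip.le
      linarith
    refine ⟨hth, hle, ?_⟩
    intro hvol
    have hWneg : Wr (u ε) (uε ε) x < 0 := by
      rcases hI0.lt_or_eq with h | h
      · rw [hWset]; linarith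
      · exfalso
        have hint : IntegrableOn (Q ε) (Set.Ioc a x) volume := (hQint ε hε).mono_set hsub
        have hae0 : (Q ε) =ᵐ[volume.restrict (Set.Ioc a x)] 0 :=
          (integral_eq_zero_iff_of_nonneg_ae
            ((ae_restrict_iff' measurableSet_Ioc).mpr hqae) hint).mp h.symm
        have hae0' : ∀ᵐ t ∂volume, t ∈ Set.Ioc a x → Q ε t = 0 :=
          (ae_restrict_iff' measurableSet_Ioc).mp hae0
        rw [Filter.eventually_iff, mem_ae_iff] at hae0'
        have hsubS : {r | r ∈ Set.Ioo a x ∧ (φ₀ r - φ₁ r).PosDef}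
            ⊆ {t | t ∈ Set.Ioc a x → Q ε t = 0}ᶜ := by
          intro r hr
          simp only [Set.mem_compl_iff, Set.mem_setOf_eq, not_forall]
          refine ⟨⟨hr.1.1, hr.1.2.le⟩, ?_⟩
          exact ne_of_gt (hQstrict ε hε r ⟨hr.1.1.le, hr.1.2.le.trans hx.2⟩ hr.2)
        have := measure_mono_null hsubS hae0'
        rw [this] at hvol
        exact lt_irrefl 0 hvol
    rw [hth, neg_div]
    have : Wr (u ε) (uε ε) x / ip (u ε x) (u ε x) < 0 := div_neg_of_neg_of_pos hWneg hip
    linarith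
end
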